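/- arXiv:1708.04986 — 9 statements merged into one kernel-verified Lean document; each statement's English description precedes it below -/
import Mathlib

section
/- If a Steiner triple system STS(n) on {0,1,...,n-1} has min-sum equal to n, then for every i ∈ {1,...,(n-1)/2} the set {0,i,n-i} is a block of the system; moreover, if an STS(n) on {0,1,...,n-1} has max-sum equal to 2n-3, then for every j ∈ {0,...,(n-3)/2} the set {j,n-2-j,n-1} is a block of the system. -/
/-- A Steiner triple system of order `n` on the point set `{0,1,…,n-1}`:
every block is a 3-subset of `{0,…,n-1}` and every 2-subset of `{0,…,n-1}`
is contained in exactly one block. -/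
def IsSTS (n : ℕ) (B : Finset (Finset ℕ)) : Prop :=
  (∀ b ∈ B, b ⊆ Finset.range n ∧ b.card = 3) ∧
  ∀ T : Finset ℕ, T ⊆ Finset.range n → T.card = 2 → ∃! b, b ∈ B ∧ T ⊆ b

lemma sum_invol {s : Finset ℕ} {t : ℕ → ℕ} (hmem : ∀ i ∈ s, t i ∈ s)
    (hinv : ∀ i ∈ s, t (t i) = i) : ∑ i ∈ s, t i = ∑ i ∈ s, i := by
  have hinj : ∀ x ∈ s, ∀ y ∈ s, t x = t y → x = y := fun a ha b hb h => by
    rw [← hinv a ha, h, hinv b hb]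
  have himg : s.image t = s := by
    apply Finset.eq_of_subset_of_card_le
    · intro x hx
      obtain ⟨a, ha, rfl⟩ := Finset.mem_image.mp hx
      exact hmem a ha
    · rw [Finset.card_image_of_injOn hinj]
  conv_rhs => rw [← himg]
  rw [Finset.sum_image hinj]

lemma all_eq_of_le {s : Finset ℕ} {f : ℕ → ℕ} {c : ℕ} (h1 : ∀ i ∈ s, c ≤ f i)
    (h2 : ∑ i ∈ s, f i = c * s.card) : ∀ i ∈ s, f i = c := by
  intro i hi
  by_contra hne
  have hlt : c < f i := lt_of_le_of_ne (h1 i hi) (Ne.symm hne)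
  have := Finset.sum_lt_sum h1 ⟨i, hi, hlt⟩
  rw [Finset.sum_const, smul_eq_mul, h2, mul_comm] at this
  exact lt_irrefl _ this

lemma all_eq_of_ge {s : Finset ℕ} {f : ℕ → ℕ} {c : ℕ} (h1 : ∀ i ∈ s, f i ≤ c)
    (h2 : ∑ i ∈ s, f i = c * s.card) : ∀ i ∈ s, f i = c := by
  intro i hi
  by_contra hne
  have hlt : f i < c := lt_of_le_of_ne (h1 i hi) hne
  have := Finset.sum_lt_sum h1 ⟨i, hi, hlt⟩
  rw [Finset.sum_const, smul_eq_mul, h2, mul_comm] at this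
  exact lt_irrefl _ this

/-- partner function through point p -/
lemma sts_partner {n : ℕ} {B : Finset (Finset ℕ)} (hS : IsSTS n B) {p : ℕ} (hp : p < n) :
    ∃ t : ℕ → ℕ, (∀ i ∈ (Finset.range n).erase p,
      t i ∈ (Finset.range n).erase p ∧ t i ≠ i ∧ ({p, i, t i} : Finset ℕ) ∈ B)
      ∧ ∀ i ∈ (Finset.range n).erase p, t (t i) = i := by
  set s := (Finset.range n).erase p with hs
  have key : ∀ i ∈ s, ∃ k, k ∈ s ∧ k ≠ i ∧ ({p, i, k} : Finset ℕ) ∈ B := by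
    intro i hi
    have hip : i ≠ p := Finset.ne_of_mem_erase hi
    have hin : i < n := Finset.mem_range.mp (Finset.mem_of_mem_erase hi)
    have hTcard : ({p, i} : Finset ℕ).card = 2 := by
      rw [Finset.card_insert_of_notMem (by simp [Ne.symm hip]), Finset.card_singleton]
    have hTsub : ({p, i} : Finset ℕ) ⊆ Finset.range n := by
      intro x hx; simp at hx; rcases hx with rfl | rfl <;> simp [hp, hin]
    obtain ⟨b, ⟨hbB, hTb⟩, _⟩ := hS.2 {p, i} hTsub hTcard
    obtain ⟨hbsub, hbcard⟩ := hS.1 b hbB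
    have hdc : (b \ {p, i}).card = 1 := by
      rw [Finset.card_sdiff_of_subset hTb, hbcard, hTcard]
    obtain ⟨k, hk⟩ := Finset.card_eq_one.mp hdc
    have hkmem : k ∈ b \ ({p, i} : Finset ℕ) := hk ▸ Finset.mem_singleton_self k
    have hkb : k ∈ b := (Finset.mem_sdiff.mp hkmem).1
    have hknpi : k ≠ p ∧ k ≠ i := by
      have := (Finset.mem_sdiff.mp hkmem).2; simp at this; exact this
    have hbeq : b = ({p, i, k} : Finset ℕ) := by
      have h1 : b \ ({p, i} : Finset ℕ) ∪ {p, i} = b := Finset.sdiff_union_of_subset hTb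
      rw [hk] at h1
      rw [← h1]; ext a; simp; tauto
    refine ⟨k, ?_, hknpi.2, hbeq ▸ hbB⟩
    rw [hs, Finset.mem_erase, Finset.mem_range]
    exact ⟨hknpi.1, Finset.mem_range.mp (hbsub hkb)⟩
  choose! t ht using key
  refine ⟨t, ht, ?_⟩
  intro i hi
  obtain ⟨hts, htne, htB⟩ := ht i hi
  obtain ⟨hts2, htne2, htB2⟩ := ht (t i) hts
  -- both blocks contain {p, t i}
  have hip : i ≠ p := Finset.ne_of_mem_erase hi
  have htp : t i ≠ p := Finset.ne_of_mem_erase hts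
  have hTcard : ({p, t i} : Finset ℕ).card = 2 := by
    rw [Finset.card_insert_of_notMem (by simp [Ne.symm htp]), Finset.card_singleton]
  have hTsub : ({p, t i} : Finset ℕ) ⊆ Finset.range n := by
    intro x hx; simp at hx
    rcases hx with rfl | rfl
    · simpa using hp
    · exact Finset.mem_of_mem_erase hts
  obtain ⟨b, _, huniq⟩ := hS.2 {p, t i} hTsub hTcard
  have h1 : ({p, i, t i} : Finset ℕ) = b := huniq _ ⟨htB, by intro x hx; simp at hx; rcases hx with rfl | rfl <;> simp⟩
  have h2 : ({p, t i, t (t i)} : Finset ℕ) = b := huniq _ ⟨htB2, by intro x hx; simp at hx; rcases hx with rfl | rfl <;> simp⟩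
  have heq : ({p, t i, t (t i)} : Finset ℕ) = ({p, i, t i} : Finset ℕ) := by rw [h1, h2]
  have : i ∈ ({p, t i, t (t i)} : Finset ℕ) := by rw [heq]; simp
  simp at this
  rcases this with h | h | h
  · exact absurd h hip
  · exact absurd h.symm htne
  · exact h.symm

/-- If an STS(n) on `{0,…,n-1}` has min-sum `n`, then `{0,i,n-i}` is a block for
every `i ∈ {1,…,(n-1)/2}`; and if it has max-sum `2n-3`, then `{j,n-2-j,n-1}` is
a block for every `j ∈ {0,…,(n-3)/2}`. -/
theorem sts_minSum_eq_n_blocks_and_maxSum_eq_blocks (n : ℕ) (B : Finset (Finset ℕ))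
    (hS : IsSTS n B) (hne : B.Nonempty) :
    ((B.inf' hne fun b => ∑ x ∈ b, x) = n →
      ∀ i, 1 ≤ i → i ≤ (n - 1) / 2 → ({0, i, n - i} : Finset ℕ) ∈ B) ∧
    ((B.sup' hne fun b => ∑ x ∈ b, x) = 2 * n - 3 →
      ∀ j, j ≤ (n - 3) / 2 → ({j, n - 2 - j, n - 1} : Finset ℕ) ∈ B) := by
  obtain ⟨b0, hb0⟩ := hne
  have hn3 : 3 ≤ n := by
    obtain ⟨hsub, hcard⟩ := hS.1 b0 hb0
    have := Finset.card_le_card hsub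
    rwa [hcard, Finset.card_range] at this
  constructor
  · intro h i hi1 hi2
    obtain ⟨t, ht, hinv⟩ := sts_partner hS (show 0 < n by omega)
    set s := (Finset.range n).erase 0 with hs
    have hcard_s : s.card = n - 1 := by
      rw [hs, Finset.card_erase_of_mem (by simp; omega), Finset.card_range]
    have hsum : ∀ a ∈ s, a + t a = n := by
      apply all_eq_of_le
      · intro a ha
        obtain ⟨hts, htne, htB⟩ := ht a ha
        have hle : n ≤ ∑ x ∈ ({0, a, t a} : Finset ℕ), x := h ▸ Finset.inf'_le _ htB
        have ha0 : a ≠ 0 := Finset.ne_of_mem_erase ha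
        have ht0 : t a ≠ 0 := Finset.ne_of_mem_erase hts
        have hsum3 : ∑ x ∈ ({0, a, t a} : Finset ℕ), x = 0 + (a + t a) := by
          rw [Finset.sum_insert (by simp; omega), Finset.sum_insert (by simp; omega),
            Finset.sum_singleton]
        omega
      · calc ∑ a ∈ s, (a + t a) = ∑ a ∈ s, a + ∑ a ∈ s, t a := Finset.sum_add_distrib
          _ = ∑ a ∈ s, a + ∑ a ∈ s, a := by
              rw [sum_invol (fun a ha => (ht a ha).1) hinv]
          _ = (∑ a ∈ s, a) * 2 := by ring
          _ = (∑ a ∈ Finset.range n, a) * 2 := by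
              rw [hs, Finset.sum_erase _ (by simp)]
          _ = n * (n - 1) := Finset.sum_range_id_mul_two n
          _ = n * s.card := by rw [hcard_s]
    have hi_s : i ∈ s := by rw [hs]; simp only [Finset.mem_erase, Finset.mem_range]; omega
    obtain ⟨_, _, htB⟩ := ht i hi_s
    have hti : t i = n - i := by have := hsum i hi_s; omega
    rwa [hti] at htB
  · intro h j hj
    obtain ⟨t, ht, hinv⟩ := sts_partner hS (show n - 1 < n by omega)
    set s := (Finset.range n).erase (n - 1) with hs
    have hseq : s = Finset.range (n - 1) := by
      rw [hs]; ext a; simp only [Finset.mem_erase, Finset.mem_range]; omega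
    have hcard_s : s.card = n - 1 := by
      rw [hseq, Finset.card_range]
    have hsum : ∀ a ∈ s, a + t a = n - 2 := by
      apply all_eq_of_ge
      · intro a ha
        obtain ⟨hts, htne, htB⟩ := ht a ha
        have hle : ∑ x ∈ ({n - 1, a, t a} : Finset ℕ), x ≤ 2 * n - 3 :=
          h ▸ Finset.le_sup' (fun b => ∑ x ∈ b, x) htB
        have ha0 : a ≠ n - 1 := Finset.ne_of_mem_erase ha
        have ht0 : t a ≠ n - 1 := Finset.ne_of_mem_erase hts
        have hsum3 : ∑ x ∈ ({n - 1, a, t a} : Finset ℕ), x = (n - 1) + (a + t a) := by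
          rw [Finset.sum_insert (by simp; omega), Finset.sum_insert (by simp; omega),
            Finset.sum_singleton]
        omega
      · calc ∑ a ∈ s, (a + t a) = ∑ a ∈ s, a + ∑ a ∈ s, t a := Finset.sum_add_distrib
          _ = ∑ a ∈ s, a + ∑ a ∈ s, a := by
              rw [sum_invol (fun a ha => (ht a ha).1) hinv]
          _ = (∑ a ∈ s, a) * 2 := by ring
          _ = (∑ a ∈ Finset.range (n - 1), a) * 2 := by rw [hseq]
          _ = (n - 1) * (n - 1 - 1) := Finset.sum_range_id_mul_two (n - 1)
          _ = (n - 2) * s.card := by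
              have h11 : n - 1 - 1 = n - 2 := by omega
              rw [h11, hcard_s, mul_comm]
    have hj_s : j ∈ s := by rw [hseq]; simp only [Finset.mem_range]; omega
    obtain ⟨_, _, htB⟩ := ht j hj_s
    have htj : t j = n - 2 - j := by have := hsum j hj_s; omega
    rw [htj] at htB
    have : ({j, n - 2 - j, n - 1} : Finset ℕ) = ({n - 1, j, n - 2 - j} : Finset ℕ) := by
      ext a; simp; tauto
    rwa [this]
end

section
/- Let n = 3m ≥ 9 with m odd and let π_B be the Bose Mapping. Then for every 0 ≤ x < y ≤ m-1, π_B((x,0)) + π_B((y,0)) + π_B((x ⊕_b y, 1)) ≥ n. -/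
/-- The Bose operation on `{0,1,…,m-1}` (for `m` odd):
`x ⊕_b y = ((m+1)/2)(x+y) mod m`. -/
def boseOp (m x y : ℕ) : ℕ := ((m + 1) / 2 * (x + y)) % m

/-- The Bose Mapping `π_B` on points `(x,i)`, `x ∈ {0,…,m-1}`, `i ∈ {0,1,2}`:
`(x,0) ↦ x`; `(x,1) ↦ 2m` if `x = 0` and `(x,1) ↦ 3m - y` where `x = 0 ⊕_b y ≠ 0`
(here `y = (2x) mod m` is the unique element with `0 ⊕_b y = x`);
`(x,2) ↦ m` if `x = 0` and `(x,2) ↦ m + (0 ⊕_b (m-x))` if `x ≠ 0`. -/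
def boseMap (m : ℕ) (p : ℕ × ℕ) : ℕ :=
  if p.2 = 0 then p.1
  else if p.2 = 1 then (if p.1 = 0 then 2 * m else 3 * m - (2 * p.1) % m)
  else if p.1 = 0 then m else m + boseOp m 0 (m - p.1)

/-- For every `0 ≤ x < y ≤ m-1`,
`π_B((x,0)) + π_B((y,0)) + π_B((x ⊕_b y, 1)) ≥ n` (`n = 3m`). -/
theorem boseMap_type2_sum_ge_01 (m n : ℕ) (hm : Odd m) (hm3 : 3 ≤ m) (hn : n = 3 * m) :
    ∀ x y : ℕ, x < y → y ≤ m - 1 →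
      n ≤ boseMap m (x, 0) + boseMap m (y, 0) + boseMap m (boseOp m x y, 1) := by
  intro x y hxy hy
  subst hn
  obtain ⟨k, hk⟩ := hm
  have h2 : 2 * boseOp m x y % m = (x + y) % m := by
    unfold boseOp
    have hhalf : 2 * ((m + 1) / 2) = m + 1 := by omega
    have hexp : (m + 1) * (x + y) = (x + y) + (x + y) * m := by ring
    rw [Nat.mul_mod_mod, ← Nat.mul_assoc, hhalf, hexp, Nat.add_mul_mod_self_right]
  have hmod_le : (x + y) % m ≤ x + y := Nat.mod_le _ _
  have hmod_lt : (x + y) % m < m := Nat.mod_lt _ (by omega)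
  simp only [boseMap]
  norm_num
  split
  · next hb =>
    have : (x + y) % m = 0 := by rw [← h2, hb]; simp
    have : m ∣ x + y := Nat.dvd_of_mod_eq_zero this
    have : m ≤ x + y := Nat.le_of_dvd (by omega) this
    omega
  · next hb =>
    rw [h2]
    omega
end

section
/- Let n = 3m ≥ 9 with m odd and let π_B be the Bose Mapping. Then for every 0 ≤ x < y ≤ m-1, π_B((x,2)) + π_B((y,2)) + π_B((x ⊕_b y, 0)) ≥ n. -/
lemma bose_pos_mod (m t : ℕ) (hm : Odd m) (ht1 : 0 < t) (ht2 : t < m) :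
    0 < ((m + 1) / 2 * t) % m := by
  rcases Nat.eq_zero_or_pos (((m + 1) / 2 * t) % m) with h | h
  · exfalso
    obtain ⟨k, hk⟩ := hm
    have hc : (m + 1) / 2 = k + 1 := by omega
    have hdvd : m ∣ (m + 1) / 2 * t := Nat.dvd_of_mod_eq_zero h
    have h2 : m ∣ 2 * ((m + 1) / 2 * t) := Dvd.dvd.mul_left hdvd 2
    have heq : 2 * ((m + 1) / 2 * t) = m * t + t := by
      rw [hc, hk]; ring
    rw [heq] at h2
    have h3 : m ∣ t := (Nat.dvd_add_right ⟨t, rfl⟩).mp h2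
    have := Nat.le_of_dvd ht1 h3
    omega
  · exact h

lemma bose_key (m : ℕ) (u v w : ℕ) (hsum : (u + v + w) % m = 0)
    (hpos : 0 < ((m+1)/2 * u) % m + ((m+1)/2 * v) % m + ((m+1)/2 * w) % m) :
    m ≤ ((m+1)/2 * u) % m + ((m+1)/2 * v) % m + ((m+1)/2 * w) % m := by
  set c := (m + 1) / 2
  have h1 : (c*u) % m + (c*v) % m + (c*w) % m ≡ c*u + c*v + c*w [MOD m] :=
    ((Nat.mod_modEq _ _).add (Nat.mod_modEq _ _)).add (Nat.mod_modEq _ _)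
  have h2 : c*u + c*v + c*w = c * (u + v + w) := by ring
  have h3 : m ∣ (u + v + w) := Nat.dvd_of_mod_eq_zero hsum
  have h4 : m ∣ c * (u + v + w) := h3.mul_left c
  have h5 : m ∣ (c*u) % m + (c*v) % m + (c*w) % m := by
    have := (h1.trans (by rw [h2] : c*u + c*v + c*w ≡ c*(u+v+w) [MOD m]))
    exact (Nat.modEq_zero_iff_dvd).mp (this.trans ((Nat.modEq_zero_iff_dvd).mpr h4))
  exact Nat.le_of_dvd hpos h5

/-- For every `0 ≤ x < y ≤ m-1`,
`π_B((x,2)) + π_B((y,2)) + π_B((x ⊕_b y, 0)) ≥ n` (`n = 3m`). -/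
theorem boseMap_type2_sum_ge_20 (m n : ℕ) (hm : Odd m) (hm3 : 3 ≤ m) (hn : n = 3 * m) :
    ∀ x y : ℕ, x < y → y ≤ m - 1 →
      n ≤ boseMap m (x, 2) + boseMap m (y, 2) + boseMap m (boseOp m x y, 0) := by
  intro x y hxy hy
  have hylt : y < m := by omega
  have hy0 : 0 < y := by omega
  by_cases hx : x = 0
  · subst hx
    simp only [boseMap, boseOp, zero_add, if_pos rfl, if_neg (by omega : ¬ y = 0)]
    norm_num
    have hs : (m - y + y + 0) % m = 0 := by
      have h : m - y + y + 0 = m := by omega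
      simp [h]
    have hk := bose_key m (m - y) y 0 hs
      (by have := bose_pos_mod m (m - y) hm (by omega) (by omega); omega)
    simp only [Nat.mul_zero, Nat.zero_mod] at hk
    omega
  · simp only [boseMap, boseOp, zero_add, if_neg hx, if_neg (by omega : ¬ y = 0)]
    norm_num
    have hs : (m - x + (m - y) + (x + y)) % m = 0 := by
      have h : m - x + (m - y) + (x + y) = 2 * m := by omega
      simp [h, Nat.mul_mod_left]
    have hk := bose_key m (m - x) (m - y) (x + y) hs
      (by have := bose_pos_mod m (m - x) hm (by omega) (by omega); omega)
    omega
end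

section
/- For every n ≥ 9 with n ≡ 3 (mod 6), the image under the Bose Mapping of the block set of the Bose Construction is a Steiner triple system on {0,1,...,n-1} whose min-sum equals n. -/
/-- The block set of the Bose Construction on the point set
`X' = {(x,i) : x ∈ {0,…,m-1}, i ∈ {0,1,2}}`:
Type 1 blocks `{(x,0),(x,1),(x,2)}` for `x ∈ {0,…,m-1}`, and Type 2 blocks
`{(x,i),(y,i),(x ⊕_b y, (i+1) mod 3)}` for `0 ≤ x < y ≤ m-1`, `i ∈ {0,1,2}`. -/
def boseBlocks (m : ℕ) : Finset (Finset (ℕ × ℕ)) :=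
  ((Finset.range m).image fun x => ({(x, 0), (x, 1), (x, 2)} : Finset (ℕ × ℕ))) ∪
  ((((Finset.range m ×ˢ Finset.range m).filter fun p => p.1 < p.2) ×ˢ Finset.range 3).image
    fun q => ({(q.1.1, q.2), (q.1.2, q.2), (boseOp m q.1.1 q.1.2, (q.2 + 1) % 3)} :
      Finset (ℕ × ℕ)))

namespace BoseAux

variable {m : ℕ}

lemma two_mul_half (hm : m % 2 = 1) : 2 * ((m + 1) / 2) = m + 1 := by omega

lemma two_boseOp (hm : m % 2 = 1) (x y : ℕ) :
    (2 * boseOp m x y) % m = (x + y) % m := by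
  unfold boseOp
  have h1 : 2 * ((m + 1) / 2 * (x + y) % m) ≡ 2 * ((m + 1) / 2 * (x + y)) [MOD m] :=
    (Nat.mod_modEq _ m).mul_left 2
  have h2 : 2 * ((m + 1) / 2 * (x + y)) = m * (x + y) + (x + y) := by
    have := two_mul_half hm; nlinarith [this]
  calc (2 * ((m + 1) / 2 * (x + y) % m)) % m
      = (2 * ((m + 1) / 2 * (x + y))) % m := h1
    _ = (m * (x + y) + (x + y)) % m := by rw [h2]
    _ = (x + y) % m := Nat.mul_add_mod m (x+y) (x+y)

lemma boseOp_lt (hm1 : 1 ≤ m) (x y : ℕ) : boseOp m x y < m :=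
  Nat.mod_lt _ (by omega)

lemma boseOp_comm (x y : ℕ) : boseOp m x y = boseOp m y x := by
  unfold boseOp; rw [Nat.add_comm x y]

lemma half_mod (hm : m % 2 = 1) (s : ℕ) :
    s % m = ((m + 1) / 2 * ((2 * s) % m)) % m := by
  have h1 : (m + 1) / 2 * ((2 * s) % m) ≡ (m + 1) / 2 * (2 * s) [MOD m] :=
    (Nat.mod_modEq _ m).mul_left _
  have h2 : (m + 1) / 2 * (2 * s) = m * s + s := by
    have := two_mul_half hm; nlinarith [this]
  rw [h1, h2, Nat.mul_add_mod]

lemma cancel2 (hm : m % 2 = 1) {a b : ℕ} (ha : a < m) (hb : b < m)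
    (h : (2 * a) % m = (2 * b) % m) : a = b := by
  have h1 : a % m = b % m := by
    rw [half_mod hm a, half_mod hm b, h]
  rwa [Nat.mod_eq_of_lt ha, Nat.mod_eq_of_lt hb] at h1

lemma boseOp_eq_iff (hm : m % 2 = 1) (hm1 : 1 ≤ m) {x y z : ℕ} (hz : z < m) :
    boseOp m x y = z ↔ (x + y) % m = (2 * z) % m := by
  constructor
  · rintro rfl; exact (two_boseOp hm x y).symm
  · intro h
    exact cancel2 hm (boseOp_lt hm1 x y) hz (by rw [two_boseOp hm, h])

lemma boseOp_self (hm : m % 2 = 1) {x : ℕ} (hx : x < m) : boseOp m x x = x :=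
  (boseOp_eq_iff hm (by omega) hx).2 (by ring_nf)

lemma boseOp_right_cancel (hm : m % 2 = 1) {x t t' : ℕ} (ht : t < m) (ht' : t' < m)
    (h : boseOp m x t = boseOp m x t') : t = t' := by
  have hm1 : 1 ≤ m := by omega
  have h1 : (x + t) % m = (x + t') % m := by
    rw [← two_boseOp hm x t, ← two_boseOp hm x t', h]
  have h2 : t % m = t' % m := Nat.ModEq.add_left_cancel' x h1
  rwa [Nat.mod_eq_of_lt ht, Nat.mod_eq_of_lt ht'] at h2

/-- the unique solution `t` of `x ⊕ t = y`. -/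
def solve (m x y : ℕ) : ℕ := (2 * y + (m - x)) % m

lemma solve_lt (hm1 : 1 ≤ m) (x y : ℕ) : solve m x y < m := Nat.mod_lt _ (by omega)

lemma boseOp_solve (hm : m % 2 = 1) {x y : ℕ} (hx : x < m) (hy : y < m) :
    boseOp m x (solve m x y) = y := by
  have hm1 : 1 ≤ m := by omega
  rw [boseOp_eq_iff hm hm1 hy]
  unfold solve
  have h1 : (x + (2 * y + (m - x)) % m) % m = (x + (2 * y + (m - x))) % m :=
    ((Nat.mod_modEq _ m).add_left x)
  rw [h1]
  have h2 : x + (2 * y + (m - x)) = 2 * y + m := by omega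
  rw [h2, Nat.add_mod_right]

lemma map0 (x : ℕ) : boseMap m (x, 0) = x := rfl

lemma two_x_mod_ne (hm : m % 2 = 1) {x : ℕ} (hx0 : x ≠ 0) (hx : x < m) :
    (2 * x) % m ≠ 0 := by
  intro h
  have : (2 * x) % m = (2 * 0) % m := by simpa using h
  exact hx0 (cancel2 hm hx (by omega) this)

lemma map1_bounds (hm : m % 2 = 1) {x : ℕ} (hx : x < m) :
    2 * m ≤ boseMap m (x, 1) ∧ boseMap m (x, 1) < 3 * m := by
  have hm1 : 1 ≤ m := by omega
  by_cases h0 : x = 0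
  · subst h0; simp [boseMap]; omega
  · have h1 : (2 * x) % m < m := Nat.mod_lt _ (by omega)
    have h2 : (2 * x) % m ≠ 0 := two_x_mod_ne hm h0 hx
    simp [boseMap, h0]; omega

lemma gval_double (hm : m % 2 = 1) {x : ℕ} (hx0 : x ≠ 0) (hx : x < m) :
    (2 * boseOp m 0 (m - x)) % m = (m - x) % m := by
  have := two_boseOp hm 0 (m - x); simpa using this

lemma gval_lt (hm1 : 1 ≤ m) (x : ℕ) : boseOp m 0 (m - x) < m := boseOp_lt hm1 _ _

lemma gval_ne (hm : m % 2 = 1) {x : ℕ} (hx0 : x ≠ 0) (hx : x < m) :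
    boseOp m 0 (m - x) ≠ 0 := by
  intro h
  have h2 := gval_double hm hx0 hx
  rw [h, Nat.mul_zero, Nat.zero_mod] at h2
  have : (m - x) % m = m - x := Nat.mod_eq_of_lt (by omega)
  omega

lemma map2_bounds (hm : m % 2 = 1) {x : ℕ} (hx : x < m) :
    m ≤ boseMap m (x, 2) ∧ boseMap m (x, 2) < 2 * m := by
  have hm1 : 1 ≤ m := by omega
  by_cases h0 : x = 0
  · subst h0; simp [boseMap]; omega
  · have := gval_lt hm1 (m := m) x
    simp [boseMap, h0]; omega

lemma boseMap_lt (hm : m % 2 = 1) {x i : ℕ} (hx : x < m) (hi : i < 3) :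
    boseMap m (x, i) < 3 * m := by
  interval_cases i
  · have : boseMap m (x, 0) = x := rfl
    omega
  · exact (map1_bounds hm hx).2
  · have := (map2_bounds hm hx).2; omega

lemma boseMap_inj (hm : m % 2 = 1) {x y i j : ℕ} (hx : x < m) (hy : y < m)
    (hi : i < 3) (hj : j < 3) (h : boseMap m (x, i) = boseMap m (y, j)) :
    (x, i) = (y, j) := by
  have hm1 : 1 ≤ m := by omega
  have m0 : ∀ z, boseMap m (z, 0) = z := fun _ => rfl
  interval_cases i <;> interval_cases j
  · rw [m0, m0] at h; rw [h]
  · have := map1_bounds hm hy; rw [m0] at h; omega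
  · have := map2_bounds hm hy; rw [m0] at h; omega
  · have := map1_bounds hm hx; rw [m0] at h; omega
  · -- both level 1
    by_cases h0 : x = 0 <;> by_cases h0' : y = 0
    · subst h0; subst h0'; rfl
    · exfalso
      have h1 : (2 * y) % m < m := Nat.mod_lt _ (by omega)
      simp [boseMap, h0, h0'] at h; omega
    · exfalso
      have h1 : (2 * x) % m < m := Nat.mod_lt _ (by omega)
      simp [boseMap, h0, h0'] at h; omega
    · have h1 : (2 * x) % m < m := Nat.mod_lt _ (by omega)
      have h2 : (2 * y) % m < m := Nat.mod_lt _ (by omega)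
      simp [boseMap, h0, h0'] at h
      have h3 : (2 * x) % m = (2 * y) % m := by omega
      have := cancel2 hm hx hy h3
      simp [this]
  · exfalso; have := map1_bounds hm hx; have := map2_bounds hm hy; omega
  · have := map2_bounds hm hx; rw [m0] at h; omega
  · exfalso; have := map1_bounds hm hy; have := map2_bounds hm hx; omega
  · -- both level 2
    by_cases h0 : x = 0 <;> by_cases h0' : y = 0
    · subst h0; subst h0'; rfl
    · exfalso
      have := gval_ne hm h0' hy
      simp [boseMap, h0, h0'] at h; omega
    · exfalso
      have := gval_ne hm h0 hx
      simp [boseMap, h0, h0'] at h; omega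
    · simp [boseMap, h0, h0'] at h
      have h3 : (2 * boseOp m 0 (m - x)) % m = (2 * boseOp m 0 (m - y)) % m := by
        rw [h]
      rw [gval_double hm h0 hx, gval_double hm h0' hy] at h3
      rw [Nat.mod_eq_of_lt (by omega), Nat.mod_eq_of_lt (by omega)] at h3
      have : x = y := by omega
      simp [this]

lemma mem_boseBlocks_iff {b : Finset (ℕ × ℕ)} :
    b ∈ boseBlocks m ↔
      (∃ x, x < m ∧ b = {(x, 0), (x, 1), (x, 2)}) ∨
      (∃ x y i, x < m ∧ y < m ∧ x < y ∧ i < 3 ∧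
        b = {(x, i), (y, i), (boseOp m x y, (i + 1) % 3)}) := by
  simp only [boseBlocks, Finset.mem_union, Finset.mem_image, Finset.mem_range,
    Finset.mem_product, Finset.mem_filter]
  constructor
  · rintro (⟨x, hx, rfl⟩ | ⟨⟨⟨x, y⟩, i⟩, ⟨⟨⟨hx, hy⟩, hxy⟩, hi⟩, rfl⟩)
    · exact Or.inl ⟨x, hx, rfl⟩
    · exact Or.inr ⟨x, y, i, hx, hy, hxy, hi, rfl⟩
  · rintro (⟨x, hx, rfl⟩ | ⟨x, y, i, hx, hy, hxy, hi, rfl⟩)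
    · exact Or.inl ⟨x, hx, rfl⟩
    · exact Or.inr ⟨⟨⟨x, y⟩, i⟩, ⟨⟨⟨hx, hy⟩, hxy⟩, hi⟩, rfl⟩

lemma type1_mem (hx : x < m) : ({((x:ℕ), (0:ℕ)), (x, 1), (x, 2)} : Finset (ℕ × ℕ)) ∈ boseBlocks m :=
  mem_boseBlocks_iff.2 (Or.inl ⟨x, hx, rfl⟩)

lemma type2_mem {x y i : ℕ} (hx : x < m) (hy : y < m) (hxy : x < y) (hi : i < 3) :
    ({(x, i), (y, i), (boseOp m x y, (i + 1) % 3)} : Finset (ℕ × ℕ)) ∈ boseBlocks m :=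
  mem_boseBlocks_iff.2 (Or.inr ⟨x, y, i, hx, hy, hxy, hi, rfl⟩)

lemma blocks_basic (hm : m % 2 = 1) :
    ∀ b ∈ boseBlocks m, (b : Finset (ℕ × ℕ)) ⊆ Finset.range m ×ˢ Finset.range 3 ∧ b.card = 3 := by
  have hm1 : 1 ≤ m := by omega
  intro b hb
  rcases mem_boseBlocks_iff.1 hb with ⟨x, hx, rfl⟩ | ⟨x, y, i, hx, hy, hxy, hi, rfl⟩
  · constructor
    · intro p hp
      simp only [Finset.mem_insert, Finset.mem_singleton] at hp
      rcases hp with rfl | rfl | rfl <;> simp [hx]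
    · rw [Finset.card_eq_three]
      exact ⟨_, _, _, by simp, by simp, by simp, rfl⟩
  · have hz := boseOp_lt hm1 (m := m) x y
    constructor
    · intro p hp
      simp only [Finset.mem_insert, Finset.mem_singleton] at hp
      rcases hp with rfl | rfl | rfl <;> simp [hx, hy, hz, hi] <;> omega
    · rw [Finset.card_eq_three]
      refine ⟨_, _, _, ?_, ?_, ?_, rfl⟩ <;> simp [Prod.ext_iff] <;> omega

lemma caseA (hm : m % 2 = 1) {x y i : ℕ} (hx : x < m) (hy : y < m) (hxy : x < y)
    (hi : i < 3) :
    ∃! b, b ∈ boseBlocks m ∧ (x, i) ∈ b ∧ (y, i) ∈ b := by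
  refine ⟨{(x, i), (y, i), (boseOp m x y, (i + 1) % 3)},
    ⟨type2_mem hx hy hxy hi, by simp, by simp⟩, ?_⟩
  rintro b ⟨hb, hp, hq⟩
  rcases mem_boseBlocks_iff.1 hb with ⟨a, ha, rfl⟩ | ⟨a, c, i', ha, hc, hac, hi', rfl⟩
  · exfalso
    simp only [Finset.mem_insert, Finset.mem_singleton, Prod.mk.injEq] at hp hq
    omega
  · simp only [Finset.mem_insert, Finset.mem_singleton, Prod.mk.injEq] at hp hq
    have hxa : x = a ∧ y = c ∧ i = i' := by omega
    obtain ⟨rfl, rfl, rfl⟩ := hxa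
    rfl

lemma caseDiag (hm : m % 2 = 1) {x i j : ℕ} (hx : x < m) (hi : i < 3) (hj : j < 3)
    (hij : i ≠ j) :
    ∃! b, b ∈ boseBlocks m ∧ (x, i) ∈ b ∧ (x, j) ∈ b := by
  refine ⟨{(x, 0), (x, 1), (x, 2)}, ⟨type1_mem hx, ?_, ?_⟩, ?_⟩
  · rcases (by omega : i = 0 ∨ i = 1 ∨ i = 2) with rfl | rfl | rfl <;> simp
  · rcases (by omega : j = 0 ∨ j = 1 ∨ j = 2) with rfl | rfl | rfl <;> simp
  rintro b ⟨hb, hp, hq⟩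
  rcases mem_boseBlocks_iff.1 hb with ⟨a, ha, rfl⟩ | ⟨a, c, i', ha, hc, hac, hi', rfl⟩
  · simp only [Finset.mem_insert, Finset.mem_singleton, Prod.mk.injEq] at hp hq
    have : x = a := by omega
    rw [this]
  · exfalso
    have k1 : boseOp m a c = a → c = a := fun h =>
      boseOp_right_cancel hm hc ha (h.trans (boseOp_self hm ha).symm)
    have k2 : boseOp m a c = c → a = c := fun h =>
      boseOp_right_cancel hm ha hc (by rw [boseOp_comm c a, h, boseOp_self hm hc])
    simp only [Finset.mem_insert, Finset.mem_singleton, Prod.mk.injEq] at hp hq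
    rcases hp with ⟨h1, h2⟩ | ⟨h1, h2⟩ | ⟨h1, h2⟩ <;>
      rcases hq with ⟨h3, h4⟩ | ⟨h3, h4⟩ | ⟨h3, h4⟩ <;>
      first
        | omega
        | (have := k1 (by omega); omega)
        | (have := k2 (by omega); omega)

lemma caseB (hm : m % 2 = 1) {x y i : ℕ} (hx : x < m) (hy : y < m) (hne : x ≠ y)
    (hi : i < 3) :
    ∃! b, b ∈ boseBlocks m ∧ (x, i) ∈ b ∧ (y, (i + 1) % 3) ∈ b := by
  have hm1 : 1 ≤ m := by omega
  set t := solve m x y with htdef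
  have ht : t < m := solve_lt hm1 x y
  have hot : boseOp m x t = y := boseOp_solve hm hx hy
  have htx : t ≠ x := by
    intro h; apply hne; rw [← hot, h, boseOp_self hm hx]
  rcases Nat.lt_or_ge x t with hlt | hge
  · refine ⟨{(x, i), (t, i), (boseOp m x t, (i + 1) % 3)},
      ⟨type2_mem hx ht hlt hi, by simp, by simp [hot]⟩, ?_⟩
    rintro b ⟨hb, hp, hq⟩
    rcases mem_boseBlocks_iff.1 hb with ⟨a, ha, rfl⟩ | ⟨a, c, i', ha, hc, hac, hi', rfl⟩
    · exfalso
      simp only [Finset.mem_insert, Finset.mem_singleton, Prod.mk.injEq] at hp hq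
      omega
    · simp only [Finset.mem_insert, Finset.mem_singleton, Prod.mk.injEq] at hp hq
      rcases hp with ⟨h1, h2⟩ | ⟨h1, h2⟩ | ⟨h1, h2⟩ <;>
        rcases hq with ⟨h3, h4⟩ | ⟨h3, h4⟩ | ⟨h3, h4⟩ <;>
        first
          | omega
          | (have h5 : boseOp m x c = y := by rw [h1]; exact h3.symm
             have h6 : c = t := boseOp_right_cancel hm hc ht (h5.trans hot.symm)
             rw [← h1, ← h2, h6])
          | (have h5 : boseOp m a x = y := by rw [h1]; exact h3.symm
             have h6 : a = t := boseOp_right_cancel hm ha ht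
               (((boseOp_comm x a).trans h5).trans hot.symm)
             omega)
  · have hlt : t < x := by omega
    refine ⟨{(t, i), (x, i), (boseOp m t x, (i + 1) % 3)},
      ⟨type2_mem ht hx hlt hi, by simp, by simp [boseOp_comm t x, hot]⟩, ?_⟩
    rintro b ⟨hb, hp, hq⟩
    rcases mem_boseBlocks_iff.1 hb with ⟨a, ha, rfl⟩ | ⟨a, c, i', ha, hc, hac, hi', rfl⟩
    · exfalso
      simp only [Finset.mem_insert, Finset.mem_singleton, Prod.mk.injEq] at hp hq
      omega
    · simp only [Finset.mem_insert, Finset.mem_singleton, Prod.mk.injEq] at hp hq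
      rcases hp with ⟨h1, h2⟩ | ⟨h1, h2⟩ | ⟨h1, h2⟩ <;>
        rcases hq with ⟨h3, h4⟩ | ⟨h3, h4⟩ | ⟨h3, h4⟩ <;>
        first
          | omega
          | (have h5 : boseOp m a x = y := by rw [h1]; exact h3.symm
             have h6 : a = t := boseOp_right_cancel hm ha ht
               (((boseOp_comm x a).trans h5).trans hot.symm)
             rw [h6, ← h1, ← h2])
          | (have h5 : boseOp m x c = y := by rw [h1]; exact h3.symm
             have h6 : c = t := boseOp_right_cancel hm hc ht (h5.trans hot.symm)
             omega)

lemma pair_unique (hm : m % 2 = 1) {x y i j : ℕ} (hx : x < m) (hy : y < m)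
    (hi : i < 3) (hj : j < 3) (hne : (x, i) ≠ (y, j)) :
    ∃! b, b ∈ boseBlocks m ∧ (x, i) ∈ b ∧ (y, j) ∈ b := by
  have swap : ∀ {p q : ℕ × ℕ}, (∃! b, b ∈ boseBlocks m ∧ p ∈ b ∧ q ∈ b) →
      (∃! b, b ∈ boseBlocks m ∧ q ∈ b ∧ p ∈ b) := by
    rintro p q ⟨b, ⟨h1, h2, h3⟩, hu⟩
    exact ⟨b, ⟨h1, h3, h2⟩, fun c ⟨g1, g2, g3⟩ => hu c ⟨g1, g3, g2⟩⟩
  by_cases hij : i = j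
  · subst hij
    have hxy : x ≠ y := fun h => hne (by rw [h])
    rcases Nat.lt_or_ge x y with h | h
    · exact caseA hm hx hy h hi
    · exact swap (caseA hm hy hx (by omega) hi)
  · by_cases hxy : x = y
    · subst hxy; exact caseDiag hm hx hi hj hij
    · rcases (by omega : j = (i + 1) % 3 ∨ i = (j + 1) % 3) with h | h
      · subst h; exact caseB hm hx hy hxy hi
      · subst h; exact swap (caseB hm hy hx (fun h' => hxy h'.symm) hj)

lemma map_injOn (hm : m % 2 = 1) {b : Finset (ℕ × ℕ)}
    (hb : b ⊆ Finset.range m ×ˢ Finset.range 3) :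
    Set.InjOn (boseMap m) b := by
  intro p hp q hq h
  have hp' := hb hp; have hq' := hb hq
  simp only [Finset.mem_product, Finset.mem_range] at hp' hq'
  obtain ⟨x, i⟩ := p; obtain ⟨y, j⟩ := q
  exact boseMap_inj hm hp'.1 hq'.1 hp'.2 hq'.2 h

lemma image_points (hm : m % 2 = 1) :
    (Finset.range m ×ˢ Finset.range 3).image (boseMap m) = Finset.range (3 * m) := by
  have hm1 : 1 ≤ m := by omega
  apply Finset.eq_of_subset_of_card_le
  · intro u hu
    simp only [Finset.mem_image, Finset.mem_product, Finset.mem_range] at hu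
    obtain ⟨⟨x, i⟩, ⟨hx, hi⟩, rfl⟩ := hu
    simpa using boseMap_lt hm hx hi
  · rw [Finset.card_range,
      Finset.card_image_of_injOn (map_injOn hm (Finset.Subset.refl _)),
      Finset.card_product, Finset.card_range, Finset.card_range]
    omega

lemma sum_triple {α : Type*} [DecidableEq α] (f : α → ℕ) {a b c : α}
    (hab : a ≠ b) (hac : a ≠ c) (hbc : b ≠ c) :
    ∑ p ∈ ({a, b, c} : Finset α), f p = f a + f b + f c := by
  rw [Finset.sum_insert (by simp [hab, hac]), Finset.sum_insert (by simp [hbc]),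
    Finset.sum_singleton, Nat.add_assoc]

lemma map2_eq (hm : m % 2 = 1) (x : ℕ) :
    boseMap m (x, 2) = m + boseOp m 0 (m - x) := by
  by_cases h0 : x = 0
  · subst h0
    have h : boseOp m 0 m = 0 := by simp [boseOp, Nat.mul_mod_left]
    simp [boseMap, h]
  · simp [boseMap, h0]

lemma sum_blocks_ge (hm : m % 2 = 1) (hm1 : 1 ≤ m) :
    ∀ b ∈ boseBlocks m, 3 * m ≤ ∑ p ∈ b, boseMap m p := by
  intro b hb
  rcases mem_boseBlocks_iff.1 hb with ⟨x, hx, rfl⟩ | ⟨x, y, i, hx, hy, hxy, hi, rfl⟩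
  · rw [sum_triple _ (by simp) (by simp) (by simp)]
    have h1 := map1_bounds hm hx
    have h2 := map2_bounds hm hx
    have h0 : boseMap m (x, 0) = x := rfl
    omega
  · have hz := boseOp_lt hm1 (m := m) x y
    have hne1 : ((x, i) : ℕ × ℕ) ≠ (y, i) := by
      simp only [ne_eq, Prod.mk.injEq, not_and]; omega
    have hne2 : ((x, i) : ℕ × ℕ) ≠ (boseOp m x y, (i + 1) % 3) := by
      simp only [ne_eq, Prod.mk.injEq, not_and]; intro _; omega
    have hne3 : ((y, i) : ℕ × ℕ) ≠ (boseOp m x y, (i + 1) % 3) := by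
      simp only [ne_eq, Prod.mk.injEq, not_and]; intro _; omega
    rw [sum_triple _ hne1 hne2 hne3]
    have h3 := two_boseOp hm x y
    interval_cases i
    · -- i = 0 : third point at level 1
      have h0 : boseMap m (x, 0) = x := rfl
      have h0' : boseMap m (y, 0) = y := rfl
      rw [h0, h0']
      by_cases hz0 : boseOp m x y = 0
      · rw [hz0] at h3 ⊢
        have hv : boseMap m (0, (0 + 1) % 3) = 2 * m := by simp [boseMap]
        rw [hv]
        simp only [Nat.mul_zero, Nat.zero_mod] at h3
        have hdvd : m ∣ x + y := Nat.dvd_of_mod_eq_zero h3.symm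
        have := Nat.le_of_dvd (by omega) hdvd
        omega
      · have hv : boseMap m (boseOp m x y, (0 + 1) % 3)
            = 3 * m - (2 * boseOp m x y) % m := by
          simp [boseMap, hz0]
        rw [hv, h3]
        have hle : (x + y) % m ≤ x + y := Nat.mod_le _ _
        have hlt : (x + y) % m < m := Nat.mod_lt _ (by omega)
        omega
    · -- i = 1
      have h1 := map1_bounds hm hx
      have h2 := map1_bounds hm hy
      have h4 := map2_bounds hm (x := boseOp m x y) hz
      omega
    · -- i = 2
      have e1 := map2_eq hm (m := m) x
      have e2 := map2_eq hm (m := m) y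
      have h0 : boseMap m (boseOp m x y, (2 + 1) % 3) = boseOp m x y := rfl
      rw [e1, e2, h0]
      have d1 : (2 * boseOp m 0 (m - x)) % m = (m - x) % m := by
        simpa using two_boseOp hm 0 (m - x)
      have d2 : (2 * boseOp m 0 (m - y)) % m = (m - y) % m := by
        simpa using two_boseOp hm 0 (m - y)
      have c1 : Nat.ModEq m (2 * boseOp m 0 (m - x)) (m - x) := d1
      have c2 : Nat.ModEq m (2 * boseOp m 0 (m - y)) (m - y) := d2
      have c3 : Nat.ModEq m (2 * boseOp m x y) (x + y) := h3
      have call := (c1.add c2).add c3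
      have hsum : m - x + (m - y) + (x + y) = 2 * m := by omega
      have hs2 : (2 * (boseOp m 0 (m - x) + boseOp m 0 (m - y) + boseOp m x y)) % m
          = 0 := by
        have e : 2 * (boseOp m 0 (m - x) + boseOp m 0 (m - y) + boseOp m x y)
            = 2 * boseOp m 0 (m - x) + 2 * boseOp m 0 (m - y) + 2 * boseOp m x y := by
          ring
        calc (2 * (boseOp m 0 (m - x) + boseOp m 0 (m - y) + boseOp m x y)) % m
            = (2 * boseOp m 0 (m - x) + 2 * boseOp m 0 (m - y) + 2 * boseOp m x y) % m := by
              rw [e]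
          _ = (m - x + (m - y) + (x + y)) % m := call
          _ = (2 * m) % m := by rw [hsum]
          _ = 0 := Nat.mul_mod_left 2 m
      have hs : (boseOp m 0 (m - x) + boseOp m 0 (m - y) + boseOp m x y) % m = 0 := by
        rw [half_mod hm (boseOp m 0 (m - x) + boseOp m 0 (m - y) + boseOp m x y), hs2,
          Nat.mul_zero, Nat.zero_mod]
      have hy0 : y ≠ 0 := by omega
      have hgy := gval_ne hm hy0 hy
      have hdvd := Nat.dvd_of_mod_eq_zero hs
      have hpos : 0 < boseOp m 0 (m - x) + boseOp m 0 (m - y) + boseOp m x y := by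
        omega
      have := Nat.le_of_dvd hpos hdvd
      omega

end BoseAux

section Main

open BoseAux Finset

theorem main_thm (n : ℕ) (hn : 9 ≤ n) (hmod : n % 6 = 3) :
    ((∀ b ∈ (boseBlocks (n / 3)).image fun b => b.image (boseMap (n / 3)),
        b ⊆ Finset.range n ∧ b.card = 3) ∧
      ∀ T : Finset ℕ, T ⊆ Finset.range n → T.card = 2 →
        ∃! b, b ∈ ((boseBlocks (n / 3)).image fun b => b.image (boseMap (n / 3))) ∧ T ⊆ b) ∧
    (∀ b ∈ (boseBlocks (n / 3)).image fun b => b.image (boseMap (n / 3)),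
      n ≤ ∑ x ∈ b, x) ∧
    (∃ b ∈ (boseBlocks (n / 3)).image fun b => b.image (boseMap (n / 3)),
      ∑ x ∈ b, x = n) := by
  have hm : (n / 3) % 2 = 1 := by omega
  have hn3 : n = 3 * (n / 3) := by omega
  set m := n / 3 with hmdef
  have hm1 : 1 ≤ m := by omega
  have hsurj : ∀ u < n, ∃ x i, (x < m ∧ i < 3) ∧ boseMap m (x, i) = u := by
    intro u hu
    have h1 : u ∈ Finset.range (3 * m) := Finset.mem_range.2 (by omega)
    rw [← image_points hm] at h1
    simp only [Finset.mem_image, Finset.mem_product, Finset.mem_range] at h1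
    obtain ⟨⟨x, i⟩, hp, hpu⟩ := h1
    exact ⟨x, i, hp, hpu⟩
  refine ⟨⟨?_, ?_⟩, ?_, ?_⟩
  · intro b' hb'
    simp only [Finset.mem_image] at hb'
    obtain ⟨b, hb, rfl⟩ := hb'
    obtain ⟨hsub, hcard⟩ := blocks_basic hm b hb
    constructor
    · intro u hu
      simp only [Finset.mem_image] at hu
      obtain ⟨⟨x, i⟩, hp, rfl⟩ := hu
      have hq := hsub hp
      simp only [Finset.mem_product, Finset.mem_range] at hq
      have hlt := boseMap_lt hm hq.1 hq.2
      exact Finset.mem_range.2 (by omega)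
    · rw [Finset.card_image_of_injOn (map_injOn hm hsub)]; exact hcard
  · intro T hT hT2
    obtain ⟨u, v, huv, rfl⟩ := Finset.card_eq_two.1 hT2
    have hu : u < n := by
      simpa using hT (Finset.mem_insert_self u {v})
    have hv : v < n := by
      simpa using hT (Finset.mem_insert_of_mem (Finset.mem_singleton_self v))
    obtain ⟨x, i, ⟨hx, hi⟩, hpu⟩ := hsurj u hu
    obtain ⟨y, j, ⟨hy, hj⟩, hqv⟩ := hsurj v hv
    have hne : ((x, i) : ℕ × ℕ) ≠ (y, j) := by
      intro h; exact huv (by rw [← hpu, ← hqv, h])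
    obtain ⟨b, ⟨hbB, hpb, hqb⟩, hbu⟩ := pair_unique hm hx hy hi hj hne
    refine ⟨b.image (boseMap m), ⟨Finset.mem_image_of_mem _ hbB, ?_⟩, ?_⟩
    · intro w hw
      simp only [Finset.mem_insert, Finset.mem_singleton] at hw
      rcases hw with rfl | rfl
      · rw [← hpu]; exact Finset.mem_image_of_mem _ hpb
      · rw [← hqv]; exact Finset.mem_image_of_mem _ hqb
    · rintro c' ⟨hc', hTc⟩
      simp only [Finset.mem_image] at hc'
      obtain ⟨c, hcB, rfl⟩ := hc'
      have hcsub := (blocks_basic hm c hcB).1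
      have hu' : u ∈ c.image (boseMap m) := hTc (Finset.mem_insert_self _ _)
      have hv' : v ∈ c.image (boseMap m) :=
        hTc (Finset.mem_insert_of_mem (Finset.mem_singleton_self v))
      simp only [Finset.mem_image] at hu' hv'
      obtain ⟨⟨x', i'⟩, hp'c, hp'u⟩ := hu'
      obtain ⟨⟨y', j'⟩, hq'c, hq'v⟩ := hv'
      have hp'S := hcsub hp'c
      have hq'S := hcsub hq'c
      simp only [Finset.mem_product, Finset.mem_range] at hp'S hq'S
      have hpeq : ((x', i') : ℕ × ℕ) = (x, i) :=
        boseMap_inj hm hp'S.1 hx hp'S.2 hi (by rw [hp'u, ← hpu])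
      have hqeq : ((y', j') : ℕ × ℕ) = (y, j) :=
        boseMap_inj hm hq'S.1 hy hq'S.2 hj (by rw [hq'v, ← hqv])
      have := hbu c ⟨hcB, hpeq ▸ hp'c, hqeq ▸ hq'c⟩
      rw [this]
  · intro b' hb'
    simp only [Finset.mem_image] at hb'
    obtain ⟨b, hb, rfl⟩ := hb'
    have hsub := (blocks_basic hm b hb).1
    rw [Finset.sum_image (fun p hp q hq h =>
      map_injOn hm hsub (Finset.mem_coe.2 hp) (Finset.mem_coe.2 hq) h)]
    have := sum_blocks_ge hm hm1 b hb
    omega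
  · refine ⟨({((0:ℕ), (0:ℕ)), (0, 1), (0, 2)} : Finset (ℕ × ℕ)).image (boseMap m),
      Finset.mem_image_of_mem _ (type1_mem (by omega)), ?_⟩
    have hsub := (blocks_basic hm _ (type1_mem (m := m) (x := 0) (by omega))).1
    rw [Finset.sum_image (fun p hp q hq h =>
      map_injOn hm hsub (Finset.mem_coe.2 hp) (Finset.mem_coe.2 hq) h)]
    rw [sum_triple _ (by decide) (by decide) (by decide)]
    have e0 : boseMap m (0, 0) = 0 := rfl
    have e1 : boseMap m (0, 1) = 2 * m := by simp [boseMap]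
    have e2 : boseMap m (0, 2) = m := by simp [boseMap]
    rw [e0, e1, e2]
    omega

end Main

/-- For every `n ≥ 9` with `n ≡ 3 (mod 6)`, the image under the Bose Mapping of
the block set of the Bose Construction is a Steiner triple system on
`{0,…,n-1}` whose min-sum equals `n`. -/
theorem bose_sts_minSum_eq (n : ℕ) (hn : 9 ≤ n) (hmod : n % 6 = 3) :
    IsSTS n ((boseBlocks (n / 3)).image fun b => b.image (boseMap (n / 3))) ∧
    (∀ b ∈ (boseBlocks (n / 3)).image fun b => b.image (boseMap (n / 3)),
      n ≤ ∑ x ∈ b, x) ∧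
    (∃ b ∈ (boseBlocks (n / 3)).image fun b => b.image (boseMap (n / 3)),
      ∑ x ∈ b, x = n) := by
  have h := main_thm n hn hmod
  exact ⟨⟨h.1.1, h.1.2⟩, h.2.1, h.2.2⟩
end

section
/- For every n ≥ 9 with n ≡ 3 (mod 6), the Steiner triple system on {0,1,...,n-1} obtained by applying the Bose Mapping to the blocks of the Bose Construction has max-sum at most 8n/3 - 4. -/
lemma sum_insert_le' {α : Type*} [DecidableEq α] (a : α) (s : Finset α) (f : α → ℕ) :
    ∑ x ∈ insert a s, f x ≤ f a + ∑ x ∈ s, f x := by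
  by_cases h : a ∈ s
  · rw [Finset.insert_eq_self.mpr h]; exact Nat.le_add_left _ _
  · rw [Finset.sum_insert h]

lemma sum_triple_le {α : Type*} [DecidableEq α] (a b c : α) (f : α → ℕ) :
    ∑ x ∈ ({a, b, c} : Finset α), f x ≤ f a + f b + f c := by
  refine le_trans (sum_insert_le' _ _ _) ?_
  have := sum_insert_le' b ({c} : Finset α) f
  simp only [Finset.sum_singleton] at this
  omega

lemma sum_image_le' {α : Type*} [DecidableEq α] (s : Finset α) (f : α → ℕ) :
    ∑ x ∈ s.image f, x ≤ ∑ x ∈ s, f x := by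
  induction s using Finset.induction with
  | empty => simp
  | insert _ _ h ih =>
    rw [Finset.image_insert, Finset.sum_insert h]
    exact le_trans (sum_insert_le' _ _ _) (by omega)

lemma two_mul_mod_inj {m x y : ℕ} (hm : Odd m) (hx : x < m) (hy : y < m)
    (h : (2 * x) % m = (2 * y) % m) : x = y := by
  have h2 : x ≡ y [MOD m] :=
    Nat.ModEq.cancel_left_of_coprime (Nat.coprime_two_right.mpr hm) h
  have hx' : x % m = y % m := h2
  rwa [Nat.mod_eq_of_lt hx, Nat.mod_eq_of_lt hy] at hx'

lemma two_mul_mod_pos {m x : ℕ} (hm : Odd m) (hx : 0 < x) (hxm : x < m) :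
    0 < (2 * x) % m := by
  rcases Nat.eq_zero_or_pos ((2 * x) % m) with h | h
  · have : x = 0 := two_mul_mod_inj hm hxm (by omega) (by simpa using h)
    omega
  · exact h

lemma boseMap_zero (m x : ℕ) : boseMap m (x, 0) = x := rfl

lemma boseMap_one (m x : ℕ) :
    boseMap m (x, 1) = if x = 0 then 2 * m else 3 * m - (2 * x) % m := rfl

lemma boseMap_two (m x : ℕ) :
    boseMap m (x, 2) = if x = 0 then m else m + boseOp m 0 (m - x) := rfl

lemma boseMap_two_le (m x : ℕ) (hm : 0 < m) : boseMap m (x, 2) ≤ 2 * m - 1 := by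
  rw [boseMap_two]
  split
  · omega
  · have : boseOp m 0 (m - x) < m := Nat.mod_lt _ hm
    omega


/-- For every `n ≥ 9` with `n ≡ 3 (mod 6)`, the Steiner triple system on
`{0,…,n-1}` obtained by applying the Bose Mapping to the blocks of the Bose
Construction has max-sum at most `8n/3 - 4`. -/
theorem bose_sts_maxSum_le (n : ℕ) (hn : 9 ≤ n) (hmod : n % 6 = 3) :
    ∀ b ∈ (boseBlocks (n / 3)).image fun b => b.image (boseMap (n / 3)),
      ∑ x ∈ b, x ≤ 8 * n / 3 - 4 := by
  set m := n / 3 with hm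
  have hm3 : 3 ≤ m := by omega
  have hmodd : Odd m := ⟨n / 6, by omega⟩
  have hgoal : 8 * n / 3 - 4 = 8 * m - 4 := by omega
  have hmpos : 0 < m := by omega
  rw [hgoal]
  intro b hb
  simp only [Finset.mem_image] at hb
  obtain ⟨B, hB, rfl⟩ := hb
  refine le_trans (sum_image_le' _ _) ?_
  simp only [boseBlocks, Finset.mem_union, Finset.mem_image, Finset.mem_product,
    Finset.mem_filter, Finset.mem_range] at hB
  rcases hB with ⟨x, hx, rfl⟩ | ⟨⟨⟨x, y⟩, i⟩, ⟨⟨⟨hxm', hym⟩, hxy⟩, hi⟩, rfl⟩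
  · -- Type 1
    refine le_trans (sum_triple_le _ _ _ _) ?_
    rw [boseMap_zero, boseMap_one, boseMap_two]
    by_cases h0 : x = 0
    · simp only [h0, eq_self_iff_true, if_true]; omega
    · simp only [if_neg h0]
      have h1 : (2 * x) % m < m := Nat.mod_lt _ hmpos
      have h3 : boseOp m 0 (m - x) < m := Nat.mod_lt _ hmpos
      omega
  · -- Type 2
    simp only at hxm' hym hxy hi ⊢
    refine le_trans (sum_triple_le _ _ _ _) ?_
    have hzm : boseOp m x y < m := Nat.mod_lt _ hmpos
    interval_cases i
    · -- i = 0 : third point level 1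
      rw [boseMap_zero, boseMap_zero]
      show x + y + boseMap m (boseOp m x y, 1) ≤ 8 * m - 4
      rw [boseMap_one]
      split
      · omega
      · have : (2 * boseOp m x y) % m < m := Nat.mod_lt _ hmpos
        omega
    · -- i = 1 : third point level 2
      rw [boseMap_one, boseMap_one]
      show _ + _ + boseMap m (boseOp m x y, 2) ≤ 8 * m - 4
      have hhz := boseMap_two_le m (boseOp m x y) hmpos
      have hy0 : y ≠ 0 := by omega
      rw [if_neg hy0]
      have hgy1 : 0 < (2 * y) % m := two_mul_mod_pos hmodd (by omega) hym
      have hgy2 : (2 * y) % m < m := Nat.mod_lt _ hmpos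
      by_cases hx0 : x = 0
      · rw [if_pos hx0]; omega
      · rw [if_neg hx0]
        have hgx1 : 0 < (2 * x) % m := two_mul_mod_pos hmodd (by omega) hxm'
        have hgx2 : (2 * x) % m < m := Nat.mod_lt _ hmpos
        have hne : ¬((2 * x) % m = 1 ∧ (2 * y) % m = 1) := by
          rintro ⟨h1, h2⟩
          exact absurd (two_mul_mod_inj hmodd hxm' hym (h1.trans h2.symm)) (by omega)
        omega
    · -- i = 2 : third point level 0
      have h1 := boseMap_two_le m x hmpos
      have h2 := boseMap_two_le m y hmpos
      show boseMap m (x, 2) + boseMap m (y, 2) + boseMap m (boseOp m x y, 0) ≤ 8 * m - 4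
      rw [boseMap_zero]
      omega
end

section
/- Let n = 3m+1 ≥ 7 with m even. The Skolem Mapping π_S is a bijection from the point set X' = {∞} ∪ {(x,i) : x ∈ {0,...,m-1}, i ∈ {0,1,2}} to {0,1,...,n-1}; moreover π_S((x,0)) ∈ {0,...,m-1}, π_S(∞) = m, π_S((x,2)) ∈ {m+1,...,2m}, and π_S((x,1)) ∈ {2m+1,...,3m} for every x ∈ {0,...,m-1}. -/
/-- The Skolem operation on `{0,1,…,m-1}` (for `m` even):
`x ⊕_s y = ((x+y) mod m)/2` if `(x+y) mod m` is even, and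
`x ⊕_s y = (((x+y) mod m)+m-1)/2` if `(x+y) mod m` is odd. -/
def skolemOp (m x y : ℕ) : ℕ :=
  if Even ((x + y) % m) then (x + y) % m / 2 else ((x + y) % m + m - 1) / 2

/-- The unique `y` with `(m-1) ⊕_s y = x` (used to define `π_S((x,1))`):
`y = 0` if `x = m-1`, `y = 2x+1` if `x < m/2`, and `y = 2x+2-m` otherwise. -/
def skolemInv (m x : ℕ) : ℕ :=
  if x = m - 1 then 0 else if x < m / 2 then 2 * x + 1 else 2 * x + 2 - m

/-- The Skolem Mapping `π_S` on the point set
`X' = {∞} ∪ {(x,i) : x ∈ {0,…,m-1}, i ∈ {0,1,2}}` (with `∞` encoded as `none`):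
`(x,0) ↦ m-1-x`; `(x,1) ↦ 2m+1` if `x = m/2-1`, and `(x,1) ↦ 2m+2+y` where
`x = (m-1) ⊕_s y ≠ m/2-1`; `(x,2) ↦ m+1+(0 ⊕_s x)`; `∞ ↦ m`. -/
def skolemMap (m : ℕ) : Option (ℕ × ℕ) → ℕ
  | none => m
  | some p =>
    if p.2 = 0 then m - 1 - p.1
    else if p.2 = 1 then
      (if p.1 = m / 2 - 1 then 2 * m + 1 else 2 * m + 2 + skolemInv m p.1)
    else m + 1 + skolemOp m 0 p.1

lemma char0 (m x : ℕ) : skolemMap m (some (x, 0)) = m - 1 - x := rfl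

lemma char2 (m x : ℕ) (hm : m % 2 = 0) (hx : x < m) :
    (x % 2 = 0 ∧ 2 * skolemMap m (some (x, 2)) = 2 * m + 2 + x) ∨
    (x % 2 = 1 ∧ 2 * skolemMap m (some (x, 2)) = 3 * m + 1 + x) := by
  have h : skolemMap m (some (x, 2)) = m + 1 + skolemOp m 0 x := rfl
  rw [h]
  unfold skolemOp
  rw [Nat.zero_add, Nat.mod_eq_of_lt hx]
  rcases Nat.even_or_odd x with he | ho
  · rw [if_pos he]
    have := Nat.even_iff.mp he; left; omega
  · rw [if_neg (Nat.not_even_iff_odd.mpr ho)]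
    have := Nat.odd_iff.mp ho; right; omega

lemma char1 (m x : ℕ) (hm : m % 2 = 0) (h2 : 2 ≤ m) (hx : x < m) :
    (x = m / 2 - 1 ∧ skolemMap m (some (x, 1)) = 2 * m + 1) ∨
    (x = m - 1 ∧ x ≠ m / 2 - 1 ∧ skolemMap m (some (x, 1)) = 2 * m + 2) ∨
    (x < m / 2 ∧ x ≠ m / 2 - 1 ∧ skolemMap m (some (x, 1)) = 2 * m + 3 + 2 * x) ∨
    (m / 2 ≤ x ∧ x ≠ m - 1 ∧ x ≠ m / 2 - 1 ∧
      skolemMap m (some (x, 1)) = 2 * m + 2 + (2 * x + 2 - m)) := by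
  have h : skolemMap m (some (x, 1)) =
      if x = m / 2 - 1 then 2 * m + 1 else 2 * m + 2 + skolemInv m x := rfl
  rw [h]
  unfold skolemInv
  split_ifs <;> omega

lemma bnd0 (m x : ℕ) (h2 : 2 ≤ m) : skolemMap m (some (x, 0)) < m := by
  have := char0 m x; omega

lemma bnd2 (m x : ℕ) (hm : m % 2 = 0) (hx : x < m) :
    m + 1 ≤ skolemMap m (some (x, 2)) ∧ skolemMap m (some (x, 2)) ≤ 2 * m := by
  have := char2 m x hm hx; omega

lemma bnd1 (m x : ℕ) (hm : m % 2 = 0) (h2 : 2 ≤ m) (hx : x < m) :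
    2 * m + 1 ≤ skolemMap m (some (x, 1)) ∧ skolemMap m (some (x, 1)) ≤ 3 * m := by
  have := char1 m x hm h2 hx; omega

/-- The Skolem Mapping is a bijection from
`X' = {∞} ∪ {(x,i) : x ∈ {0,…,m-1}, i ∈ {0,1,2}}` onto `{0,1,…,n-1}`
(`n = 3m+1`), with `π_S((x,0)) ∈ {0,…,m-1}`, `π_S(∞) = m`,
`π_S((x,2)) ∈ {m+1,…,2m}` and `π_S((x,1)) ∈ {2m+1,…,3m}`. -/
theorem skolemMap_bijective (m n : ℕ) (hm : Even m) (hm2 : 2 ≤ m) (hn : n = 3 * m + 1) :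
    Set.BijOn (skolemMap m)
      {p : Option (ℕ × ℕ) | p = none ∨ ∃ x i : ℕ, x < m ∧ i < 3 ∧ p = some (x, i)}
      (Set.Iio n) ∧
    (∀ x < m, skolemMap m (some (x, 0)) < m) ∧
    skolemMap m none = m ∧
    (∀ x < m, m + 1 ≤ skolemMap m (some (x, 2)) ∧ skolemMap m (some (x, 2)) ≤ 2 * m) ∧
    (∀ x < m, 2 * m + 1 ≤ skolemMap m (some (x, 1)) ∧ skolemMap m (some (x, 1)) ≤ 3 * m) := by
  have hm' : m % 2 = 0 := Nat.even_iff.mp hm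
  subst hn
  have h0 : skolemMap m none = m := rfl
  refine ⟨⟨?_, ?_, ?_⟩, ?_, rfl, ?_, ?_⟩
  · rintro p (rfl | ⟨x, i, hx, hi, rfl⟩)
    · simp only [Set.mem_Iio, h0]; omega
    · simp only [Set.mem_Iio]
      interval_cases i
      · have := bnd0 m x hm2; omega
      · have := bnd1 m x hm' hm2 hx; omega
      · have := bnd2 m x hm' hx; omega
  · rintro p (rfl | ⟨x, i, hx, hi, rfl⟩) q (rfl | ⟨y, j, hy, hj, rfl⟩) hfq
    · rfl
    · exfalso
      rw [h0] at hfq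
      interval_cases j
      · have := bnd0 m y hm2; omega
      · have := bnd1 m y hm' hm2 hy; omega
      · have := bnd2 m y hm' hy; omega
    · exfalso
      rw [h0] at hfq
      interval_cases i
      · have := bnd0 m x hm2; omega
      · have := bnd1 m x hm' hm2 hx; omega
      · have := bnd2 m x hm' hx; omega
    · interval_cases i <;> interval_cases j <;>
        simp only [Option.some.injEq, Prod.mk.injEq]
      · have cx := char0 m x; have cy := char0 m y
        exact ⟨by omega, trivial⟩
      · have cx := bnd0 m x hm2; have cy := bnd1 m y hm' hm2 hy
        exact absurd hfq (by omega)
      · have cx := bnd0 m x hm2; have cy := bnd2 m y hm' hy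
        exact absurd hfq (by omega)
      · have cx := bnd1 m x hm' hm2 hx; have cy := bnd0 m y hm2
        exact absurd hfq (by omega)
      · have cx := char1 m x hm' hm2 hx; have cy := char1 m y hm' hm2 hy
        exact ⟨by omega, trivial⟩
      · have cx := bnd1 m x hm' hm2 hx; have cy := bnd2 m y hm' hy
        exact absurd hfq (by omega)
      · have cx := bnd2 m x hm' hx; have cy := bnd0 m y hm2
        exact absurd hfq (by omega)
      · have cx := bnd2 m x hm' hx; have cy := bnd1 m y hm' hm2 hy
        exact absurd hfq (by omega)
      · have cx := char2 m x hm' hx; have cy := char2 m y hm' hy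
        exact ⟨by omega, trivial⟩
  · intro k hk
    simp only [Set.mem_Iio] at hk
    simp only [Set.mem_setOf_eq, Set.mem_image]
    by_cases h1 : k < m
    · exact ⟨some (m - 1 - k, 0), Or.inr ⟨m - 1 - k, 0, by omega, by omega, rfl⟩,
        by have := char0 m (m - 1 - k); omega⟩
    by_cases h2 : k = m
    · exact ⟨none, Or.inl rfl, by omega⟩
    by_cases h3 : k ≤ 2 * m
    · by_cases h4 : k < m + 1 + m / 2
      · refine ⟨some (2 * (k - m - 1), 2), Or.inr ⟨2 * (k - m - 1), 2, by omega, by omega, rfl⟩, ?_⟩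
        have := char2 m (2 * (k - m - 1)) hm' (by omega)
        omega
      · refine ⟨some (2 * (k - m - 1) + 1 - m, 2),
          Or.inr ⟨2 * (k - m - 1) + 1 - m, 2, by omega, by omega, rfl⟩, ?_⟩
        have := char2 m (2 * (k - m - 1) + 1 - m) hm' (by omega)
        omega
    by_cases h5 : k = 2 * m + 1
    · refine ⟨some (m / 2 - 1, 1), Or.inr ⟨m / 2 - 1, 1, by omega, by omega, rfl⟩, ?_⟩
      have := char1 m (m / 2 - 1) hm' hm2 (by omega)
      omega
    by_cases h6 : k = 2 * m + 2
    · refine ⟨some (m - 1, 1), Or.inr ⟨m - 1, 1, by omega, by omega, rfl⟩, ?_⟩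
      have := char1 m (m - 1) hm' hm2 (by omega)
      omega
    by_cases h7 : k % 2 = 1
    · refine ⟨some ((k - (2 * m + 3)) / 2, 1),
        Or.inr ⟨(k - (2 * m + 3)) / 2, 1, by omega, by omega, rfl⟩, ?_⟩
      have := char1 m ((k - (2 * m + 3)) / 2) hm' hm2 (by omega)
      omega
    · refine ⟨some ((k - m - 4) / 2, 1),
        Or.inr ⟨(k - m - 4) / 2, 1, by omega, by omega, rfl⟩, ?_⟩
      have := char1 m ((k - m - 4) / 2) hm' hm2 (by omega)
      omega
  · intro x hx; exact bnd0 m x hm2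
  · intro x hx; exact bnd2 m x hm' hx
  · intro x hx; exact bnd1 m x hm' hm2 hx
end

section
/- Let n = 3m+1 ≥ 7 with m even and let π_S be the Skolem Mapping. Then for every 0 ≤ x < y ≤ m-1, π_S((x,0)) + π_S((y,0)) + π_S((x ⊕_s y, 1)) ≥ n. -/
/-- For every `0 ≤ x < y ≤ m-1`,
`π_S((x,0)) + π_S((y,0)) + π_S((x ⊕_s y, 1)) ≥ n` (`n = 3m+1`). -/
theorem skolemMap_type2_sum_ge_01 (m n : ℕ) (hm : Even m) (hm2 : 2 ≤ m)
    (hn : n = 3 * m + 1) :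
    ∀ x y : ℕ, x < y → y ≤ m - 1 →
      n ≤ skolemMap m (some (x, 0)) + skolemMap m (some (y, 0)) +
        skolemMap m (some (skolemOp m x y, 1)) := by
  intro x y hxy hy
  obtain ⟨k, hk⟩ := hm
  have hs : (x + y < m ∧ (x + y) % m = x + y) ∨
      (m ≤ x + y ∧ (x + y) % m = x + y - m) := by
    rcases Nat.lt_or_ge (x + y) m with h | h
    · exact Or.inl ⟨h, Nat.mod_eq_of_lt h⟩
    · refine Or.inr ⟨h, ?_⟩
      rw [Nat.mod_eq_sub_mod h, Nat.mod_eq_of_lt (by omega)]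
  set s := (x + y) % m with hsdef
  have hz : skolemOp m x y = if Even s then s / 2 else (s + m - 1) / 2 := rfl
  set z := skolemOp m x y with hzdef
  have hse : s % 2 = 0 ∨ s % 2 = 1 := Nat.mod_two_eq_zero_or_one _
  have hzval : z = s / 2 ∧ s % 2 = 0 ∨ z = (s + m - 1) / 2 ∧ s % 2 = 1 := by
    rw [hz]
    rcases hse with h | h
    · left; rw [if_pos (Nat.even_iff.mpr h)]; exact ⟨rfl, h⟩
    · right; rw [if_neg (by simp [Nat.even_iff, h])]; exact ⟨rfl, h⟩
  clear hz hzdef hsdef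
  clear_value z s
  simp only [skolemMap, skolemInv]
  norm_num
  split_ifs <;> omega
end

section
/- Let n = 3m+1 ≥ 7 with m even and let π_S be the Skolem Mapping. Then for every 0 ≤ x ≤ m/2-1, π_S(∞) + π_S((x+m/2, 0)) + π_S((x,1)) ≥ n. -/
/-- For every `0 ≤ x ≤ m/2 - 1`,
`π_S(∞) + π_S((x+m/2, 0)) + π_S((x,1)) ≥ n` (`n = 3m+1`). -/
theorem skolemMap_type3_sum_ge (m n : ℕ) (hm : Even m) (hm2 : 2 ≤ m)
    (hn : n = 3 * m + 1) :
    ∀ x : ℕ, x ≤ m / 2 - 1 →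
      n ≤ skolemMap m none + skolemMap m (some (x + m / 2, 0)) +
        skolemMap m (some (x, 1)) := by
  intro x hx
  subst hn
  simp only [skolemMap, skolemInv]
  norm_num
  split_ifs <;> omega
end

section
/- For every n ≥ 7 with n ≡ 1 (mod 6), the image under the Skolem Mapping of the block set of the Skolem Construction is a Steiner triple system on {0,1,...,n-1} whose min-sum equals n. -/
/-- The block set of the Skolem Construction on the point set
`X' = {∞} ∪ {(x,i) : x ∈ {0,…,m-1}, i ∈ {0,1,2}}` (with `∞` encoded as `none`):
Type 1 blocks `{(x,0),(x,1),(x,2)}` for `x ∈ {0,…,m/2-1}`;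
Type 2 blocks `{(x,i),(y,i),(x ⊕_s y, (i+1) mod 3)}` for `0 ≤ x < y ≤ m-1`,
`i ∈ {0,1,2}`; Type 3 blocks `{∞,(x+m/2,i),(x,(i+1) mod 3)}` for
`x ∈ {0,…,m/2-1}`, `i ∈ {0,1,2}`. -/
def skolemBlocks (m : ℕ) : Finset (Finset (Option (ℕ × ℕ))) :=
  ((Finset.range (m / 2)).image fun x =>
    ({some (x, 0), some (x, 1), some (x, 2)} : Finset (Option (ℕ × ℕ)))) ∪
  ((((Finset.range m ×ˢ Finset.range m).filter fun p => p.1 < p.2) ×ˢ Finset.range 3).image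
    fun q => ({some (q.1.1, q.2), some (q.1.2, q.2),
      some (skolemOp m q.1.1 q.1.2, (q.2 + 1) % 3)} : Finset (Option (ℕ × ℕ)))) ∪
  ((Finset.range (m / 2) ×ˢ Finset.range 3).image
    fun q => ({none, some (q.1 + m / 2, q.2), some (q.1, (q.2 + 1) % 3)} :
      Finset (Option (ℕ × ℕ))))

namespace SkolemAux

def sOf (m z : ℕ) : ℕ := if 2 * z < m then 2 * z else 2 * z + 1 - m

lemma add_mod_cases {m x y : ℕ} (hx : x < m) (hy : y < m) :
    ((x + y) % m = x + y ∧ x + y < m) ∨ ((x + y) % m = x + y - m ∧ m ≤ x + y ∧ x + y - m < m) := by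
  rcases lt_or_ge (x + y) m with h | h
  · exact Or.inl ⟨Nat.mod_eq_of_lt h, h⟩
  · refine Or.inr ⟨?_, h, by omega⟩
    rw [Nat.mod_eq_sub_mod h, Nat.mod_eq_of_lt (by omega)]

lemma op_char {m x y : ℕ} (hm2 : m % 2 = 0) (hm : 0 < m) :
    skolemOp m x y < m ∧ sOf m (skolemOp m x y) = (x + y) % m := by
  have hs : (x + y) % m < m := Nat.mod_lt _ hm
  unfold skolemOp sOf
  simp only [Nat.even_iff]
  split_ifs <;> omega

lemma sOf_inj {m a b : ℕ} (hm2 : m % 2 = 0) (ha : a < m) (hb : b < m)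
    (h : sOf m a = sOf m b) : a = b := by
  unfold sOf at h; split_ifs at h <;> omega

lemma op_right_inj {m x y₁ y₂ : ℕ} (hm2 : m % 2 = 0) (hx : x < m) (h1 : y₁ < m) (h2 : y₂ < m)
    (h : skolemOp m x y₁ = skolemOp m x y₂) : y₁ = y₂ := by
  have hm : 0 < m := by omega
  have c1 := op_char (m := m) (x := x) (y := y₁) hm2 hm
  have c2 := op_char (m := m) (x := x) (y := y₂) hm2 hm
  rw [h] at c1
  have hmm : (x + y₁) % m = (x + y₂) % m := c1.2 ▸ c2.2
  have e1 := add_mod_cases hx h1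
  have e2 := add_mod_cases hx h2
  omega

lemma op_surj {m x z : ℕ} (hm2 : m % 2 = 0) (hm : 0 < m) (hx : x < m) (hz : z < m) :
    ∃ y, y < m ∧ skolemOp m x y = z := by
  have hs : sOf m z < m := by unfold sOf; split_ifs <;> omega
  refine ⟨(sOf m z + m - x) % m, Nat.mod_lt _ hm, ?_⟩
  have c := op_char (m := m) (x := x) (y := (sOf m z + m - x) % m) hm2 hm
  refine sOf_inj hm2 c.1 hz ?_
  rw [c.2, Nat.add_mod_mod]
  have h3 : x + (sOf m z + m - x) = sOf m z + m := by omega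
  rw [h3, Nat.add_mod_right, Nat.mod_eq_of_lt hs]

lemma op_comm {m x y : ℕ} : skolemOp m x y = skolemOp m y x := by
  unfold skolemOp; rw [Nat.add_comm x y]

lemma op_self {m u : ℕ} (hm2 : m % 2 = 0) (hm : 0 < m) (hu : u < m) :
    skolemOp m u u = (if 2 * u < m then u else u - m / 2) := by
  have c := op_char (m := m) (x := u) (y := u) hm2 hm
  have e := add_mod_cases hu hu
  refine sOf_inj hm2 c.1 (by split_ifs <;> omega) ?_
  rw [c.2]
  unfold sOf
  split_ifs <;> omega

lemma inv_lt {m x : ℕ} (hm : 2 ≤ m) (hm2 : m % 2 = 0) (hx : x < m) : skolemInv m x < m := by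
  unfold skolemInv; split_ifs <;> omega

lemma op_inv {m x : ℕ} (hm : 2 ≤ m) (hm2 : m % 2 = 0) (hx : x < m) :
    skolemOp m (m - 1) (skolemInv m x) = x := by
  have hm0 : 0 < m := by omega
  have hinv : skolemInv m x < m := inv_lt hm hm2 hx
  have c := op_char (m := m) (x := m - 1) (y := skolemInv m x) hm2 hm0
  refine sOf_inj hm2 c.1 hx ?_
  rw [c.2]
  have hmc := add_mod_cases (show m - 1 < m by omega) hinv
  unfold skolemInv at *
  unfold sOf
  split_ifs at * <;> omega


lemma inv_le {m x : ℕ} (hm : 2 ≤ m) (hm2 : m % 2 = 0) (hx : x < m) (hne : x ≠ m / 2 - 1) :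
    skolemInv m x ≤ m - 2 := by
  unfold skolemInv; split_ifs <;> omega

lemma inv_inj {m x₁ x₂ : ℕ} (hm : 2 ≤ m) (hm2 : m % 2 = 0) (h1 : x₁ < m) (h2 : x₂ < m)
    (h : skolemInv m x₁ = skolemInv m x₂) : x₁ = x₂ := by
  have := op_inv hm hm2 h1
  have := op_inv hm hm2 h2
  rw [← this, ← op_inv hm hm2 h1, h]

lemma map_none {m : ℕ} : skolemMap m none = m := rfl

lemma map0 {m x : ℕ} : skolemMap m (some (x, 0)) = m - 1 - x := rfl

lemma map1 {m x : ℕ} : skolemMap m (some (x, 1)) =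
    (if x = m / 2 - 1 then 2 * m + 1 else 2 * m + 2 + skolemInv m x) := rfl

lemma map2 {m x : ℕ} : skolemMap m (some (x, 2)) = m + 1 + skolemOp m 0 x := rfl

/-- omega-friendly characterization of level-1 map values -/
lemma f1_char {m z : ℕ} (hm : 2 ≤ m) (hm2 : m % 2 = 0) (hz : z < m) :
    (2 * z = m - 2 ∧ skolemMap m (some (z, 1)) = 2 * m + 1) ∨
    (z = m - 1 ∧ skolemMap m (some (z, 1)) = 2 * m + 2) ∨
    (2 * z < m - 2 ∧ skolemMap m (some (z, 1)) = 2 * m + 3 + 2 * z) ∨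
    (m ≤ 2 * z ∧ z < m - 1 ∧ skolemMap m (some (z, 1)) = m + 4 + 2 * z) := by
  rw [map1]
  unfold skolemInv
  split_ifs <;> omega

lemma f2_char {m z : ℕ} (hm : 2 ≤ m) (hm2 : m % 2 = 0) (hz : z < m) :
    skolemOp m 0 z < m ∧ (2 * skolemOp m 0 z = z ∨ 2 * skolemOp m 0 z = z + m - 1) := by
  have c := op_char (m := m) (x := 0) (y := z) hm2 (by omega)
  rw [Nat.zero_add, Nat.mod_eq_of_lt hz] at c
  unfold sOf at c
  split_ifs at c <;> omega

/-- facts about skolemOp x y for sum computations and case analysis -/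
lemma op_facts {m x y : ℕ} (hm2 : m % 2 = 0) (hm : 0 < m) (hx : x < m) (hy : y < m) :
    skolemOp m x y < m ∧
    (2 * skolemOp m x y = (x + y) % m ∨ 2 * skolemOp m x y = (x + y) % m + m - 1) ∧
    (((x + y) % m = x + y ∧ x + y < m) ∨ ((x + y) % m = x + y - m ∧ m ≤ x + y)) := by
  have c := op_char (m := m) (x := x) (y := y) hm2 hm
  have e := add_mod_cases hx hy
  unfold sOf at c
  split_ifs at c <;> omega

def pts (m : ℕ) : Finset (Option (ℕ × ℕ)) :=
  insert none ((Finset.range m ×ˢ Finset.range 3).image some)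

lemma mem_pts {m : ℕ} {p : Option (ℕ × ℕ)} :
    p ∈ pts m ↔ p = none ∨ ∃ x i, x < m ∧ i < 3 ∧ p = some (x, i) := by
  unfold pts
  simp only [Finset.mem_insert, Finset.mem_image, Finset.mem_product, Finset.mem_range,
    Prod.exists]
  constructor
  · rintro (h | ⟨x, i, ⟨hx, hi⟩, rfl⟩)
    · exact Or.inl h
    · exact Or.inr ⟨x, i, hx, hi, rfl⟩
  · rintro (h | ⟨x, i, hx, hi, rfl⟩)
    · exact Or.inl h
    · exact Or.inr ⟨x, i, ⟨hx, hi⟩, rfl⟩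

lemma pts_card {m : ℕ} : (pts m).card = 3 * m + 1 := by
  unfold pts
  rw [Finset.card_insert_of_notMem (by simp),
    Finset.card_image_of_injective _ (Option.some_injective _),
    Finset.card_product, Finset.card_range, Finset.card_range]
  omega

lemma map_bounds {m x i : ℕ} (hm : 2 ≤ m) (hm2 : m % 2 = 0) (hx : x < m) (hi : i < 3) :
    (i = 0 ∧ skolemMap m (some (x, i)) < m) ∨
    (i = 1 ∧ 2 * m + 1 ≤ skolemMap m (some (x, i)) ∧ skolemMap m (some (x, i)) ≤ 3 * m) ∨
    (i = 2 ∧ m + 1 ≤ skolemMap m (some (x, i)) ∧ skolemMap m (some (x, i)) ≤ 2 * m) := by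
  interval_cases i
  · rw [map0]; omega
  · have := f1_char hm hm2 hx; omega
  · have := f2_char hm hm2 hx; rw [map2]; omega

lemma map_inj {m : ℕ} (hm : 2 ≤ m) (hm2 : m % 2 = 0) :
    ∀ p ∈ pts m, ∀ q ∈ pts m, skolemMap m p = skolemMap m q → p = q := by
  have hm0 : 0 < m := by omega
  intro p hp q hq h
  rw [mem_pts] at hp hq
  rcases hp with rfl | ⟨x, i, hx, hi, rfl⟩ <;> rcases hq with rfl | ⟨y, j, hy, hj, rfl⟩
  · rfl
  · have := map_bounds hm hm2 hy hj
    rw [map_none] at h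
    exfalso; interval_cases j <;> omega
  · have := map_bounds hm hm2 hx hi
    rw [map_none] at h
    exfalso; interval_cases i <;> omega
  · have bx := map_bounds hm hm2 hx hi
    have by' := map_bounds hm hm2 hy hj
    simp only [Option.some.injEq, Prod.mk.injEq]
    interval_cases i <;> interval_cases j <;> [skip; (exfalso; omega); (exfalso; omega);
      (exfalso; omega); skip; (exfalso; omega); (exfalso; omega); (exfalso; omega); skip] <;>
      refine ⟨?_, rfl⟩
    · rw [map0, map0] at h; omega
    · rw [map1, map1] at h
      split_ifs at h <;> try omega
      exact inv_inj hm hm2 hx hy (by omega)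
    · rw [map2, map2] at h
      exact op_right_inj hm2 hm0 hx hy (by omega)


lemma mem_blocks {m : ℕ} {b : Finset (Option (ℕ × ℕ))} : b ∈ skolemBlocks m ↔
    (∃ x, x < m / 2 ∧ b = {some (x, 0), some (x, 1), some (x, 2)}) ∨
    (∃ x y i, x < y ∧ y < m ∧ i < 3 ∧
      b = {some (x, i), some (y, i), some (skolemOp m x y, (i + 1) % 3)}) ∨
    (∃ x i, x < m / 2 ∧ i < 3 ∧ b = {none, some (x + m / 2, i), some (x, (i + 1) % 3)}) := by
  unfold skolemBlocks
  simp only [Finset.mem_union, Finset.mem_image, Finset.mem_range, Finset.mem_product,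
    Finset.mem_filter, Prod.exists]
  constructor
  · rintro ((⟨x, hx, rfl⟩ | ⟨x, y, i, ⟨⟨⟨hx, hy⟩, hxy⟩, hi⟩, rfl⟩) | ⟨x, i, ⟨hx, hi⟩, rfl⟩)
    · exact Or.inl ⟨x, hx, rfl⟩
    · exact Or.inr (Or.inl ⟨x, y, i, hxy, hy, hi, rfl⟩)
    · exact Or.inr (Or.inr ⟨x, i, hx, hi, rfl⟩)
  · rintro (⟨x, hx, rfl⟩ | ⟨x, y, i, hxy, hy, hi, rfl⟩ | ⟨x, i, hx, hi, rfl⟩)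
    · exact Or.inl (Or.inl ⟨x, hx, rfl⟩)
    · exact Or.inl (Or.inr ⟨x, y, i, ⟨⟨⟨by omega, hy⟩, hxy⟩, hi⟩, rfl⟩)
    · exact Or.inr ⟨x, i, ⟨hx, hi⟩, rfl⟩

lemma card3 {α : Type*} [DecidableEq α] {a b c : α} (h1 : a ≠ b) (h2 : a ≠ c) (h3 : b ≠ c) :
    ({a, b, c} : Finset α).card = 3 := by
  rw [Finset.card_insert_of_notMem (by simp [h1, h2]),
    Finset.card_insert_of_notMem (by simp [h3]), Finset.card_singleton]

lemma sum3 {α : Type*} [DecidableEq α] {a b c : α} (f : α → ℕ) (h1 : a ≠ b) (h2 : a ≠ c)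
    (h3 : b ≠ c) : ∑ x ∈ ({a, b, c} : Finset α), f x = f a + f b + f c := by
  rw [Finset.sum_insert (by simp [h1, h2]), Finset.sum_insert (by simp [h3]),
    Finset.sum_singleton]
  omega

lemma blocks_shape {m : ℕ} (hm : 2 ≤ m) (hm2 : m % 2 = 0) :
    ∀ b ∈ skolemBlocks m, b ⊆ pts m ∧ b.card = 3 := by
  have hm0 : 0 < m := by omega
  intro b hb
  rw [mem_blocks] at hb
  rcases hb with ⟨x, hx, rfl⟩ | ⟨x, y, i, hxy, hy, hi, rfl⟩ | ⟨x, i, hx, hi, rfl⟩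
  · constructor
    · intro p hp
      simp only [Finset.mem_insert, Finset.mem_singleton] at hp
      rw [mem_pts]
      rcases hp with rfl | rfl | rfl
      · exact Or.inr ⟨x, 0, by omega, by omega, rfl⟩
      · exact Or.inr ⟨x, 1, by omega, by omega, rfl⟩
      · exact Or.inr ⟨x, 2, by omega, by omega, rfl⟩
    · exact card3 (by simp) (by simp) (by simp)
  · have hop := (op_facts hm2 hm0 (by omega : x < m) hy).1
    constructor
    · intro p hp
      simp only [Finset.mem_insert, Finset.mem_singleton] at hp
      rw [mem_pts]
      rcases hp with rfl | rfl | rfl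
      · exact Or.inr ⟨x, i, by omega, hi, rfl⟩
      · exact Or.inr ⟨y, i, hy, hi, rfl⟩
      · exact Or.inr ⟨skolemOp m x y, (i + 1) % 3, hop, by omega, rfl⟩
    · exact card3 (by simp; omega) (by simp; omega) (by simp; omega)
  · constructor
    · intro p hp
      simp only [Finset.mem_insert, Finset.mem_singleton] at hp
      rw [mem_pts]
      rcases hp with rfl | rfl | rfl
      · exact Or.inl rfl
      · exact Or.inr ⟨x + m / 2, i, by omega, hi, rfl⟩
      · exact Or.inr ⟨x, (i + 1) % 3, by omega, by omega, rfl⟩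
    · exact card3 (by simp) (by simp) (by simp; omega)


lemma exun_swap {α : Type*} {S : Finset (Finset α)} {p q : α}
    (h : ∃! b, b ∈ S ∧ p ∈ b ∧ q ∈ b) : ∃! b, b ∈ S ∧ q ∈ b ∧ p ∈ b := by
  obtain ⟨b, ⟨h1, h2, h3⟩, hu⟩ := h
  exact ⟨b, ⟨h1, h3, h2⟩, fun c ⟨g1, g2, g3⟩ => hu c ⟨g1, g3, g2⟩⟩

lemma cover_inf {m u i : ℕ} (hm : 2 ≤ m) (hm2 : m % 2 = 0) (hu : u < m) (hi : i < 3) :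
    ∃! b, b ∈ skolemBlocks m ∧ none ∈ b ∧ some (u, i) ∈ b := by
  rcases lt_or_ge u (m / 2) with hcase | hcase
  · -- u < m/2 : block T3 u ((i+2)%3)
    have hi' : ((i + 2) % 3 + 1) % 3 = i := by omega
    refine ⟨{none, some (u + m / 2, (i + 2) % 3), some (u, i)}, ⟨?_, by simp, by simp⟩, ?_⟩
    · exact mem_blocks.mpr (Or.inr (Or.inr ⟨u, (i + 2) % 3, hcase, by omega, by rw [hi']⟩))
    · rintro b ⟨hb, hnb, hub⟩
      rcases mem_blocks.mp hb with ⟨x, hx, rfl⟩ | ⟨x, y, k, hxy, hy, hk, rfl⟩ |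
        ⟨x, k, hx, hk, rfl⟩
      · simp at hnb
      · simp at hnb
      · simp only [Finset.mem_insert, Finset.mem_singleton, Option.some.injEq,
          Prod.mk.injEq, reduceCtorEq, false_or] at hub
        rcases hub with ⟨h1, h2⟩ | ⟨h1, h2⟩
        · omega
        · subst h1
          have e1 : k = (i + 2) % 3 := by omega
          subst e1
          rw [hi']
  · -- u ≥ m/2 : block T3 (u - m/2) i
    have he : u - m / 2 + m / 2 = u := by omega
    refine ⟨{none, some (u, i), some (u - m / 2, (i + 1) % 3)}, ⟨?_, by simp, by simp⟩, ?_⟩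
    · exact mem_blocks.mpr (Or.inr (Or.inr ⟨u - m / 2, i, by omega, hi, by rw [he]⟩))
    · rintro b ⟨hb, hnb, hub⟩
      rcases mem_blocks.mp hb with ⟨x, hx, rfl⟩ | ⟨x, y, k, hxy, hy, hk, rfl⟩ |
        ⟨x, k, hx, hk, rfl⟩
      · simp at hnb
      · simp at hnb
      · simp only [Finset.mem_insert, Finset.mem_singleton, Option.some.injEq,
          Prod.mk.injEq, reduceCtorEq, false_or] at hub
        rcases hub with ⟨h1, h2⟩ | ⟨h1, h2⟩
        · subst h2
          have e1 : x = u - m / 2 := by omega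
          subst e1
          rw [he]
        · omega

lemma cover_same {m u v i : ℕ} (hm : 2 ≤ m) (hm2 : m % 2 = 0) (hu : u < m) (hv : v < m)
    (huv : u < v) (hi : i < 3) :
    ∃! b, b ∈ skolemBlocks m ∧ some (u, i) ∈ b ∧ some (v, i) ∈ b := by
  refine ⟨{some (u, i), some (v, i), some (skolemOp m u v, (i + 1) % 3)},
    ⟨mem_blocks.mpr (Or.inr (Or.inl ⟨u, v, i, huv, hv, hi, rfl⟩)), by simp, by simp⟩, ?_⟩
  rintro b ⟨hb, hub, hvb⟩
  rcases mem_blocks.mp hb with ⟨x, hx, rfl⟩ | ⟨x, y, k, hxy, hy, hk, rfl⟩ | ⟨x, k, hx, hk, rfl⟩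
  · simp only [Finset.mem_insert, Finset.mem_singleton, Option.some.injEq,
      Prod.mk.injEq] at hub hvb
    omega
  · simp only [Finset.mem_insert, Finset.mem_singleton, Option.some.injEq,
      Prod.mk.injEq] at hub hvb
    rcases hub with ⟨rfl, rfl⟩ | ⟨rfl, rfl⟩ | ⟨h1, h2⟩
    · rcases hvb with ⟨h1, h2⟩ | ⟨rfl, h2⟩ | ⟨h1, h2⟩ <;> first | rfl | omega
    · rcases hvb with ⟨h1, h2⟩ | ⟨h1, h2⟩ | ⟨h1, h2⟩ <;> omega
    · omega
  · simp only [Finset.mem_insert, Finset.mem_singleton, Option.some.injEq,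
      Prod.mk.injEq, reduceCtorEq, false_or] at hub hvb
    omega


lemma op_self_cases {m u : ℕ} (hm2 : m % 2 = 0) (hm0 : 0 < m) (hu : u < m) :
    (2 * u < m ∧ skolemOp m u u = u) ∨ (m ≤ 2 * u ∧ skolemOp m u u = u - m / 2) := by
  have hdd := op_self hm2 hm0 hu
  rcases Nat.lt_or_ge (2 * u) m with h | h
  · exact Or.inl ⟨h, by rwa [if_pos h] at hdd⟩
  · exact Or.inr ⟨h, by rwa [if_neg (by omega)] at hdd⟩

lemma cover_succ_ne {m u v i j : ℕ} (hm : 2 ≤ m) (hm2 : m % 2 = 0) (hu : u < m) (hv : v < m)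
    (hi : i < 3) (hj : j = (i + 1) % 3) (hdv : skolemOp m u u ≠ v) :
    ∃! b, b ∈ skolemBlocks m ∧ some (u, i) ∈ b ∧ some (v, j) ∈ b := by
  have hm0 : 0 < m := by omega
  have hd := op_self_cases hm2 hm0 hu
  obtain ⟨w, hw, hop⟩ := op_surj hm2 hm0 hu hv
  have hwu : w ≠ u := by
    intro h
    rw [h] at hop
    exact hdv hop
  rcases lt_or_gt_of_ne hwu with hlt | hgt
  · -- w < u : block T2 w u i
    refine ⟨{some (w, i), some (u, i), some (skolemOp m w u, (i + 1) % 3)},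
      ⟨mem_blocks.mpr (Or.inr (Or.inl ⟨w, u, i, hlt, hu, hi, rfl⟩)), by simp, ?_⟩, ?_⟩
    · have : skolemOp m w u = v := by rw [op_comm]; exact hop
      simp [this, hj]
    · rintro b ⟨hb, hub, hvb⟩
      rcases mem_blocks.mp hb with ⟨x, hx, rfl⟩ | ⟨x, y, k, hxy, hy, hk, rfl⟩ |
        ⟨x, k, hx, hk, rfl⟩
      · simp only [Finset.mem_insert, Finset.mem_singleton, Option.some.injEq,
          Prod.mk.injEq] at hub hvb
        exfalso; omega
      · simp only [Finset.mem_insert, Finset.mem_singleton, Option.some.injEq,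
          Prod.mk.injEq] at hub hvb
        rcases hub with ⟨h1, h2⟩ | ⟨h1, h2⟩ | ⟨h1, h2⟩
        · rcases hvb with ⟨g1, g2⟩ | ⟨g1, g2⟩ | ⟨g1, g2⟩
          · exfalso; omega
          · exfalso; omega
          · -- u = x, v = op x y : y = w, but then x < y means u < w, contra
            rw [← h1] at g1
            have : y = w := op_right_inj hm2 hu hy hw (by omega)
            exfalso; omega
        · rcases hvb with ⟨g1, g2⟩ | ⟨g1, g2⟩ | ⟨g1, g2⟩
          · exfalso; omega
          · exfalso; omega
          · -- u = y, v = op x u : x = w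
            rw [← h1] at g1
            have hc : skolemOp m x u = skolemOp m u x := op_comm
            have : x = w := op_right_inj hm2 hu (by omega) hw (by omega)
            subst this
            subst h1
            have : k = i := by omega
            subst this
            rfl
        · exfalso
          rcases hvb with ⟨g1, g2⟩ | ⟨g1, g2⟩ | ⟨g1, g2⟩ <;> omega
      · simp only [Finset.mem_insert, Finset.mem_singleton, Option.some.injEq,
          Prod.mk.injEq, reduceCtorEq, false_or] at hub hvb
        exfalso; omega
  · -- u < w : block T2 u w i
    refine ⟨{some (u, i), some (w, i), some (skolemOp m u w, (i + 1) % 3)},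
      ⟨mem_blocks.mpr (Or.inr (Or.inl ⟨u, w, i, hgt, hw, hi, rfl⟩)), by simp, ?_⟩, ?_⟩
    · simp [hop, hj]
    · rintro b ⟨hb, hub, hvb⟩
      rcases mem_blocks.mp hb with ⟨x, hx, rfl⟩ | ⟨x, y, k, hxy, hy, hk, rfl⟩ |
        ⟨x, k, hx, hk, rfl⟩
      · simp only [Finset.mem_insert, Finset.mem_singleton, Option.some.injEq,
          Prod.mk.injEq] at hub hvb
        exfalso; omega
      · simp only [Finset.mem_insert, Finset.mem_singleton, Option.some.injEq,
          Prod.mk.injEq] at hub hvb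
        rcases hub with ⟨h1, h2⟩ | ⟨h1, h2⟩ | ⟨h1, h2⟩
        · rcases hvb with ⟨g1, g2⟩ | ⟨g1, g2⟩ | ⟨g1, g2⟩
          · exfalso; omega
          · exfalso; omega
          · -- u = x, v = op u y : y = w
            rw [← h1] at g1
            have : y = w := op_right_inj hm2 hu hy hw (by omega)
            subst this
            subst h1
            have : k = i := by omega
            subst this
            rfl
        · rcases hvb with ⟨g1, g2⟩ | ⟨g1, g2⟩ | ⟨g1, g2⟩
          · exfalso; omega
          · exfalso; omega
          · -- u = y, v = op x u : x = w, but x < y = u means w < u contra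
            rw [← h1] at g1
            have hc : skolemOp m x u = skolemOp m u x := op_comm
            have : x = w := op_right_inj hm2 hu (by omega) hw (by omega)
            exfalso; omega
        · exfalso
          rcases hvb with ⟨g1, g2⟩ | ⟨g1, g2⟩ | ⟨g1, g2⟩ <;> omega
      · simp only [Finset.mem_insert, Finset.mem_singleton, Option.some.injEq,
          Prod.mk.injEq, reduceCtorEq, false_or] at hub hvb
        exfalso; omega


lemma cover_succ {m u v i j : ℕ} (hm : 2 ≤ m) (hm2 : m % 2 = 0) (hu : u < m) (hv : v < m)
    (hi : i < 3) (hj : j = (i + 1) % 3) :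
    ∃! b, b ∈ skolemBlocks m ∧ some (u, i) ∈ b ∧ some (v, j) ∈ b := by
  have hm0 : 0 < m := by omega
  rcases Nat.lt_or_ge (2 * u) m with h2u | h2u
  · have hd : skolemOp m u u = u := by rw [op_self hm2 hm0 hu, if_pos h2u]
    by_cases hvu : v = u
    · -- Type 1 block
      subst hvu
      refine ⟨{some (v, 0), some (v, 1), some (v, 2)},
        ⟨mem_blocks.mpr (Or.inl ⟨v, by omega, rfl⟩), ?_, ?_⟩, ?_⟩
      · interval_cases i <;> simp
      · have : j < 3 := by omega
        interval_cases j <;> simp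
      · rintro b ⟨hb, hub, hvb⟩
        rcases mem_blocks.mp hb with ⟨x, hx, rfl⟩ | ⟨x, y, k, hxy, hy, hk, rfl⟩ |
          ⟨x, k, hx, hk, rfl⟩
        · simp only [Finset.mem_insert, Finset.mem_singleton, Option.some.injEq,
            Prod.mk.injEq] at hub hvb
          have : x = v := by omega
          subst this
          rfl
        · simp only [Finset.mem_insert, Finset.mem_singleton, Option.some.injEq,
            Prod.mk.injEq] at hub hvb
          exfalso
          rcases hub with ⟨h1, h2⟩ | ⟨h1, h2⟩ | ⟨h1, h2⟩
          · rcases hvb with ⟨g1, g2⟩ | ⟨g1, g2⟩ | ⟨g1, g2⟩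
            · omega
            · omega
            · rw [← h1] at g1
              have : y = v := op_right_inj hm2 hu hy hu (by omega)
              omega
          · rcases hvb with ⟨g1, g2⟩ | ⟨g1, g2⟩ | ⟨g1, g2⟩
            · omega
            · omega
            · rw [← h1] at g1
              have hc : skolemOp m x v = skolemOp m v x := op_comm
              have : x = v := op_right_inj hm2 hu (by omega) hu (by omega)
              omega
          · rcases hvb with ⟨g1, g2⟩ | ⟨g1, g2⟩ | ⟨g1, g2⟩ <;> omega
        · simp only [Finset.mem_insert, Finset.mem_singleton, Option.some.injEq,
            Prod.mk.injEq, reduceCtorEq, false_or] at hub hvb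
          exfalso; omega
    · exact cover_succ_ne hm hm2 hu hv hi hj (by rw [hd]; exact fun h => hvu h.symm)
  · have hd : skolemOp m u u = u - m / 2 := by rw [op_self hm2 hm0 hu, if_neg (by omega)]
    by_cases hvu : v = u - m / 2
    · -- Type 3 block
      subst hvu
      refine ⟨{none, some (u, i), some (u - m / 2, (i + 1) % 3)},
        ⟨mem_blocks.mpr (Or.inr (Or.inr ⟨u - m / 2, i, by omega, hi,
          by rw [show u - m / 2 + m / 2 = u by omega]⟩)), by simp, by simp [hj]⟩, ?_⟩
      rintro b ⟨hb, hub, hvb⟩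
      rcases mem_blocks.mp hb with ⟨x, hx, rfl⟩ | ⟨x, y, k, hxy, hy, hk, rfl⟩ |
        ⟨x, k, hx, hk, rfl⟩
      · simp only [Finset.mem_insert, Finset.mem_singleton, Option.some.injEq,
          Prod.mk.injEq] at hub hvb
        exfalso; omega
      · simp only [Finset.mem_insert, Finset.mem_singleton, Option.some.injEq,
          Prod.mk.injEq] at hub hvb
        exfalso
        rcases hub with ⟨h1, h2⟩ | ⟨h1, h2⟩ | ⟨h1, h2⟩
        · rcases hvb with ⟨g1, g2⟩ | ⟨g1, g2⟩ | ⟨g1, g2⟩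
          · omega
          · omega
          · rw [← h1] at g1
            have : y = u := op_right_inj hm2 hu hy hu (by omega)
            omega
        · rcases hvb with ⟨g1, g2⟩ | ⟨g1, g2⟩ | ⟨g1, g2⟩
          · omega
          · omega
          · rw [← h1] at g1
            have hc : skolemOp m x u = skolemOp m u x := op_comm
            have : x = u := op_right_inj hm2 hu (by omega) hu (by omega)
            omega
        · rcases hvb with ⟨g1, g2⟩ | ⟨g1, g2⟩ | ⟨g1, g2⟩ <;> omega
      · simp only [Finset.mem_insert, Finset.mem_singleton, Option.some.injEq,
          Prod.mk.injEq, reduceCtorEq, false_or] at hub hvb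
        rcases hub with ⟨h1, h2⟩ | ⟨h1, h2⟩
        · rcases hvb with ⟨g1, g2⟩ | ⟨g1, g2⟩
          · exfalso; omega
          · have hxe : x = u - m / 2 := by omega
            subst hxe
            have hki : k = i := by omega
            subst hki
            rw [show u - m / 2 + m / 2 = u by omega]
        · exfalso
          rcases hvb with ⟨g1, g2⟩ | ⟨g1, g2⟩ <;> omega
    · exact cover_succ_ne hm hm2 hu hv hi hj (by rw [hd]; exact fun h => hvu h.symm)

lemma cover {m : ℕ} (hm : 2 ≤ m) (hm2 : m % 2 = 0) {p q : Option (ℕ × ℕ)}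
    (hp : p ∈ pts m) (hq : q ∈ pts m) (hne : p ≠ q) :
    ∃! b, b ∈ skolemBlocks m ∧ p ∈ b ∧ q ∈ b := by
  rcases mem_pts.mp hp with rfl | ⟨u, i, hu, hi, rfl⟩ <;>
    rcases mem_pts.mp hq with rfl | ⟨v, j, hv, hj, rfl⟩
  · exact absurd rfl hne
  · exact cover_inf hm hm2 hv hj
  · exact exun_swap (cover_inf hm hm2 hu hi)
  · by_cases hij : i = j
    · subst hij
      have huv : u ≠ v := by
        intro h
        exact hne (by rw [h])
      rcases lt_or_gt_of_ne huv with h | h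
      · exact cover_same hm hm2 hu hv h hi
      · exact exun_swap (cover_same hm hm2 hv hu h hi)
    · have : j = (i + 1) % 3 ∨ i = (j + 1) % 3 := by omega
      rcases this with h | h
      · exact cover_succ hm hm2 hu hv hi h
      · exact exun_swap (cover_succ hm hm2 hv hu hj h)


lemma map_image {m : ℕ} (hm : 2 ≤ m) (hm2 : m % 2 = 0) :
    (pts m).image (skolemMap m) = Finset.range (3 * m + 1) := by
  apply Finset.eq_of_subset_of_card_le
  · intro a ha
    obtain ⟨p, hp, rfl⟩ := Finset.mem_image.mp ha
    rw [Finset.mem_range]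
    rcases mem_pts.mp hp with rfl | ⟨x, i, hx, hi, rfl⟩
    · rw [map_none]; omega
    · have := map_bounds hm hm2 hx hi
      omega
  · rw [Finset.card_range,
      Finset.card_image_of_injOn (fun a ha b hb h => map_inj hm hm2 a ha b hb h), pts_card]

lemma sum_lower {m : ℕ} (hm : 2 ≤ m) (hm2 : m % 2 = 0) :
    ∀ b ∈ skolemBlocks m, 3 * m + 1 ≤ ∑ p ∈ b, skolemMap m p := by
  have hm0 : 0 < m := by omega
  intro b hb
  rcases mem_blocks.mp hb with ⟨x, hx, rfl⟩ | ⟨x, y, i, hxy, hy, hi, rfl⟩ | ⟨x, i, hx, hi, rfl⟩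
  · rw [sum3 _ (by simp) (by simp) (by simp)]
    have h1 := f1_char hm hm2 (show x < m by omega)
    have h2 := f2_char hm hm2 (show x < m by omega)
    rw [map0, map2]
    omega
  · have hxm : x < m := by omega
    have opf := op_facts hm2 hm0 hxm hy
    interval_cases i <;> simp only [Nat.reduceAdd, Nat.reduceMod]
    · rw [sum3 _ (by simp <;> omega) (by simp) (by simp)]
      have h1 := f1_char hm hm2 opf.1
      rw [map0, map0]
      omega
    · rw [sum3 _ (by simp <;> omega) (by simp) (by simp)]
      have h1 := f1_char hm hm2 hxm
      have h2 := f1_char hm hm2 hy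
      have h3 := f2_char hm hm2 opf.1
      rw [map2]
      omega
    · rw [sum3 _ (by simp <;> omega) (by simp) (by simp)]
      have h1 := f2_char hm hm2 hxm
      have h2 := f2_char hm hm2 hy
      rw [map2, map2, map0]
      omega
  · have hxm : x + m / 2 < m := by omega
    interval_cases i <;> simp only [Nat.reduceAdd, Nat.reduceMod]
    · rw [sum3 _ (by simp) (by simp) (by simp <;> omega)]
      have h1 := f1_char hm hm2 (show x < m by omega)
      rw [map_none, map0]
      omega
    · rw [sum3 _ (by simp) (by simp) (by simp <;> omega)]
      have h1 := f1_char hm hm2 hxm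
      have h2 := f2_char hm hm2 (show x < m by omega)
      rw [map_none, map2]
      omega
    · rw [sum3 _ (by simp) (by simp) (by simp <;> omega)]
      have h1 := f2_char hm hm2 hxm
      rw [map_none, map2, map0]
      omega

lemma min_block {m : ℕ} (hm : 2 ≤ m) (hm2 : m % 2 = 0) :
    ∃ b ∈ skolemBlocks m, ∑ p ∈ b, skolemMap m p = 3 * m + 1 := by
  refine ⟨{none, some (m / 2 - 1 + m / 2, 0), some (m / 2 - 1, 1)},
    mem_blocks.mpr (Or.inr (Or.inr ⟨m / 2 - 1, 0, by omega, by omega, rfl⟩)), ?_⟩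
  rw [sum3 _ (by simp) (by simp) (by simp <;> omega)]
  have h1 := f1_char hm hm2 (show m / 2 - 1 < m by omega)
  rw [map_none, map0]
  omega

end SkolemAux

open SkolemAux

/-- For every `n ≥ 7` with `n ≡ 1 (mod 6)`, the image under the Skolem Mapping
of the block set of the Skolem Construction is a Steiner triple system on
`{0,…,n-1}` whose min-sum equals `n`. -/
theorem skolem_sts_minSum_eq (n : ℕ) (hn : 7 ≤ n) (hmod : n % 6 = 1) :
    IsSTS n ((skolemBlocks ((n - 1) / 3)).image fun b => b.image (skolemMap ((n - 1) / 3))) ∧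
    (∀ b ∈ (skolemBlocks ((n - 1) / 3)).image fun b => b.image (skolemMap ((n - 1) / 3)),
      n ≤ ∑ x ∈ b, x) ∧
    (∃ b ∈ (skolemBlocks ((n - 1) / 3)).image fun b => b.image (skolemMap ((n - 1) / 3)),
      ∑ x ∈ b, x = n) := by
  set m := (n - 1) / 3 with hmdef
  have hm : 2 ≤ m := by omega
  have hm2 : m % 2 = 0 := by omega
  have hnm : n = 3 * m + 1 := by omega
  have hshape := blocks_shape hm hm2
  have himg : (pts m).image (skolemMap m) = Finset.range n := by
    rw [hnm]; exact map_image hm hm2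
  have hsum : ∀ c ∈ skolemBlocks m, ∑ x ∈ c.image (skolemMap m), x = ∑ p ∈ c, skolemMap m p := by
    intro c hc
    exact Finset.sum_image fun a ha b hb h =>
      map_inj hm hm2 a ((hshape c hc).1 ha) b ((hshape c hc).1 hb) h
  refine ⟨⟨?_, ?_⟩, ?_, ?_⟩
  · -- shapes
    intro b hb
    obtain ⟨c, hc, rfl⟩ := Finset.mem_image.mp hb
    constructor
    · intro a ha
      obtain ⟨p, hp, rfl⟩ := Finset.mem_image.mp ha
      rw [← himg]
      exact Finset.mem_image_of_mem _ ((hshape c hc).1 hp)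
    · rw [Finset.card_image_of_injOn
        (fun a ha b hb h => map_inj hm hm2 a ((hshape c hc).1 ha) b ((hshape c hc).1 hb) h)]
      exact (hshape c hc).2
  · -- pairs
    intro T hT hcard
    obtain ⟨a, b, hab, rfl⟩ := Finset.card_eq_two.mp hcard
    have ha : a ∈ Finset.range n := hT (by simp)
    have hb : b ∈ Finset.range n := hT (by simp)
    rw [← himg] at ha hb
    obtain ⟨p, hp, hpa⟩ := Finset.mem_image.mp ha
    obtain ⟨q, hq, hqb⟩ := Finset.mem_image.mp hb
    have hpq : p ≠ q := by
      intro h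
      exact hab (by rw [← hpa, ← hqb, h])
    obtain ⟨c, ⟨hcS, hpc, hqc⟩, hcu⟩ := cover hm hm2 hp hq hpq
    refine ⟨c.image (skolemMap m), ⟨Finset.mem_image_of_mem _ hcS, ?_⟩, ?_⟩
    · rw [Finset.insert_subset_iff, Finset.singleton_subset_iff, ← hpa, ← hqb]
      exact ⟨Finset.mem_image_of_mem _ hpc, Finset.mem_image_of_mem _ hqc⟩
    · rintro d ⟨hd, hTd⟩
      obtain ⟨c', hc', rfl⟩ := Finset.mem_image.mp hd
      have hac : a ∈ c'.image (skolemMap m) := hTd (by simp)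
      have hbc : b ∈ c'.image (skolemMap m) := hTd (by simp)
      obtain ⟨p', hp'c, hp'a⟩ := Finset.mem_image.mp hac
      obtain ⟨q', hq'c, hq'b⟩ := Finset.mem_image.mp hbc
      have hp' : p' = p :=
        map_inj hm hm2 p' ((hshape c' hc').1 hp'c) p hp (by rw [hp'a, hpa])
      have hq' : q' = q :=
        map_inj hm hm2 q' ((hshape c' hc').1 hq'c) q hq (by rw [hq'b, hqb])
      rw [hcu c' ⟨hc', hp' ▸ hp'c, hq' ▸ hq'c⟩]
  · -- lower bound
    intro b hb
    obtain ⟨c, hc, rfl⟩ := Finset.mem_image.mp hb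
    rw [hsum c hc, hnm]
    exact sum_lower hm hm2 c hc
  · -- witness
    obtain ⟨c, hc, hcsum⟩ := min_block hm hm2
    exact ⟨c.image (skolemMap m), Finset.mem_image_of_mem _ hc, by rw [hsum c hc, hcsum, hnm]⟩
end
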